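/- arXiv:1505.06357 — 6 statements merged into one kernel-verified Lean document; each statement's English description precedes it below -/
import Mathlib

section
/- Let n and p be natural numbers, let c ∈ ℝ^p and x ∈ ℝ^d be vectors, let A be a real p×d matrix, Γ a real p×n matrix, Ω a symmetric positive semidefinite real p×p matrix and λ ∈ ℝ^p. Set m := λ − Ω c and M := Γᵀ Ω Γ + I_n. Then ∫_{ℝ^n} φ_n(ξ) · exp(−(1/2)·((c + A x + Γ ξ)ᵀ Ω (c + A x + Γ ξ) − 2 λᵀ (c + A x + Γ ξ))) dξ = (det M)^{−1/2} · exp(−γ/2), where γ = (A x)ᵀ (Ω − Ω Γ M⁻¹ Γᵀ Ω) (A x) − 2 xᵀ Aᵀ (I_p − Ω Γ M⁻¹ Γᵀ) m + cᵀ Ω c − 2 λᵀ c − (Γᵀ m)ᵀ M⁻¹ (Γᵀ m). -/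
open Matrix MeasureTheory Real


lemma gauss_pi (n : ℕ) :
    ∫ ξ : Fin n → ℝ, Real.exp (-(ξ ⬝ᵥ ξ) / 2) = (2 * Real.pi) ^ ((n : ℝ) / 2) := by
  have h1 : ∀ ξ : Fin n → ℝ, Real.exp (-(ξ ⬝ᵥ ξ) / 2)
      = ∏ i, Real.exp (-(1/2) * (ξ i) ^ 2) := by
    intro ξ
    rw [← Real.exp_sum]
    congr 1
    rw [dotProduct]
    rw [← Finset.sum_neg_distrib, Finset.sum_div]
    exact Finset.sum_congr rfl fun i _ => by ring
  simp_rw [h1]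
  rw [volume_pi, integral_fintype_prod_eq_pow (ι := Fin n) (fun t : ℝ => Real.exp (-(1/2) * t ^ 2))]
  rw [integral_gaussian, Fintype.card_fin,
    show π / (1/2) = 2 * π by ring,
    ← Real.rpow_natCast (√(2*π)) n, Real.sqrt_eq_rpow, ← Real.rpow_mul (by positivity)]
  ring_nf

open scoped MatrixOrder in
lemma quad_int {n : ℕ} {M : Matrix (Fin n) (Fin n) ℝ} (hM : M.PosDef) :
    ∫ ξ : Fin n → ℝ, Real.exp (-(ξ ⬝ᵥ M.mulVec ξ) / 2)
      = (2 * Real.pi) ^ ((n : ℝ) / 2) * M.det ^ (-(1:ℝ) / 2) := by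
  set S := CFC.sqrt M with hS
  have hSh : Sᵀ = S := by
    exact (CFC.sqrt_nonneg M).posSemidef.isHermitian.eq
  have hSS : S * S = M := CFC.sqrt_mul_sqrt_self M hM.posSemidef.nonneg
  have hdetM : 0 < M.det := hM.det_pos
  have hdetS : |S.det| ^ 2 = M.det := by
    rw [sq_abs, ← hSS, Matrix.det_mul, sq]
  have hdetSne : S.det ≠ 0 := by
    intro h
    rw [h] at hdetS; simp at hdetS; rw [← hdetS] at hdetM; simp at hdetM
  have hpt : ∀ ξ : Fin n → ℝ, ξ ⬝ᵥ M.mulVec ξ = (S.mulVec ξ) ⬝ᵥ (S.mulVec ξ) := by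
    intro ξ
    rw [← hSS, ← Matrix.mulVec_mulVec, Matrix.dotProduct_mulVec, ← Matrix.mulVec_transpose, hSh]
  have hdet0 : LinearMap.det (Matrix.toLin' S) ≠ 0 := by
    rw [LinearMap.det_toLin']; exact hdetSne
  have hmap : Measure.map (Matrix.toLin' S) volume
      = ENNReal.ofReal (|(LinearMap.det (Matrix.toLin' S))⁻¹|) • volume :=
    Real.map_linearMap_volume_pi_eq_smul_volume_pi hdet0
  have hcont : Continuous fun y : Fin n → ℝ => Real.exp (-(y ⬝ᵥ y) / 2) := by
    have : Continuous fun y : Fin n → ℝ => y ⬝ᵥ y := by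
      unfold dotProduct
      exact continuous_finset_sum _ fun i _ => ((continuous_apply i).mul (continuous_apply i))
    exact Real.continuous_exp.comp (this.neg.div_const 2)
  have hint : ∫ ξ : Fin n → ℝ, Real.exp (-((S.mulVec ξ) ⬝ᵥ (S.mulVec ξ)) / 2)
      = |S.det|⁻¹ * ∫ y : Fin n → ℝ, Real.exp (-(y ⬝ᵥ y) / 2) := by
    have h2 : ∫ ξ : Fin n → ℝ, Real.exp (-((S.mulVec ξ) ⬝ᵥ (S.mulVec ξ)) / 2)
        = ∫ y, Real.exp (-(y ⬝ᵥ y) / 2) ∂(Measure.map (Matrix.toLin' S) volume) := by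
      rw [MeasureTheory.integral_map]
      · simp [Matrix.toLin'_apply]
      · exact (Matrix.toLin' S).continuous_of_finiteDimensional.aemeasurable
      · exact hcont.aestronglyMeasurable
    rw [h2, hmap, MeasureTheory.integral_smul_measure, LinearMap.det_toLin',
      ENNReal.toReal_ofReal (abs_nonneg _), abs_inv]
    simp
  calc ∫ ξ : Fin n → ℝ, Real.exp (-(ξ ⬝ᵥ M.mulVec ξ) / 2)
      = ∫ ξ : Fin n → ℝ, Real.exp (-((S.mulVec ξ) ⬝ᵥ (S.mulVec ξ)) / 2) := by
        simp_rw [hpt]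
    _ = |S.det|⁻¹ * ∫ y : Fin n → ℝ, Real.exp (-(y ⬝ᵥ y) / 2) := hint
    _ = (2 * Real.pi) ^ ((n : ℝ) / 2) * M.det ^ (-(1:ℝ) / 2) := by
        rw [gauss_pi, mul_comm]
        congr 1
        rw [show (-(1:ℝ)/2) = -(1/2) by ring, Real.rpow_neg hdetM.le, ← Real.sqrt_eq_rpow,
          ← hdetS, Real.sqrt_sq (abs_nonneg _)]

lemma dp_shift {k l : ℕ} (N : Matrix (Fin k) (Fin l) ℝ) (u : Fin k → ℝ) (w : Fin l → ℝ) :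
    u ⬝ᵥ N.mulVec w = (Nᵀ.mulVec u) ⬝ᵥ w := by
  rw [Matrix.dotProduct_mulVec, ← Matrix.mulVec_transpose]


set_option maxHeartbeats 1000000 in
/-- Lemma 1 of the paper: Gaussian marginalization of an exponential quadratic form.
`z = c + A x + Γ ξ` with `ξ` standard Gaussian on `ℝ^n`. -/
theorem gaussian_marginalization_lemma
    (n p d : ℕ) (c : Fin p → ℝ) (x : Fin d → ℝ)
    (A : Matrix (Fin p) (Fin d) ℝ) (Γ : Matrix (Fin p) (Fin n) ℝ)
    (Ω : Matrix (Fin p) (Fin p) ℝ) (hΩ : Ω.PosSemidef) (lam : Fin p → ℝ) :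
    let m : Fin p → ℝ := lam - Ω.mulVec c
    let M : Matrix (Fin n) (Fin n) ℝ := Γᵀ * Ω * Γ + 1
    let γ : ℝ :=
      (A.mulVec x) ⬝ᵥ ((Ω - Ω * Γ * M⁻¹ * Γᵀ * Ω).mulVec (A.mulVec x))
        - 2 * (x ⬝ᵥ Aᵀ.mulVec ((1 - Ω * Γ * M⁻¹ * Γᵀ).mulVec m))
        + c ⬝ᵥ Ω.mulVec c - 2 * (lam ⬝ᵥ c)
        - (Γᵀ.mulVec m) ⬝ᵥ (M⁻¹.mulVec (Γᵀ.mulVec m))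
    (∫ ξ : Fin n → ℝ,
        ((2 * Real.pi) ^ (-(n : ℝ) / 2) * Real.exp (-(ξ ⬝ᵥ ξ) / 2)) *
          Real.exp (-(1 / 2) *
            ((c + A.mulVec x + Γ.mulVec ξ) ⬝ᵥ
                Ω.mulVec (c + A.mulVec x + Γ.mulVec ξ)
              - 2 * (lam ⬝ᵥ (c + A.mulVec x + Γ.mulVec ξ)))))
      = M.det ^ (-(1 : ℝ) / 2) * Real.exp (-γ / 2) := by
  intro m M γ
  have hMdef : M = Γᵀ * Ω * Γ + 1 := rfl
  have hmdef : m = lam - Ω.mulVec c := rfl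
  have hγdef : γ = (A.mulVec x) ⬝ᵥ ((Ω - Ω * Γ * M⁻¹ * Γᵀ * Ω).mulVec (A.mulVec x))
        - 2 * (x ⬝ᵥ Aᵀ.mulVec ((1 - Ω * Γ * M⁻¹ * Γᵀ).mulVec m))
        + c ⬝ᵥ Ω.mulVec c - 2 * (lam ⬝ᵥ c)
        - (Γᵀ.mulVec m) ⬝ᵥ (M⁻¹.mulVec (Γᵀ.mulVec m)) := rfl
  clear_value m M γ
  -- basic symmetry facts
  have hΩt : Ωᵀ = Ω := by
    have := hΩ.isHermitian
    exact (by simpa [Matrix.conjTranspose_eq_transpose_of_trivial] using this : Ω.IsSymm).eq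
  have hM : M.PosDef := by
    have h1 : (Γᵀ * Ω * Γ).PosSemidef := by
      have := hΩ.conjTranspose_mul_mul_same Γ
      simpa [Matrix.conjTranspose_eq_transpose_of_trivial] using this
    rw [hMdef]
    exact Matrix.PosDef.posSemidef_add h1 Matrix.PosDef.one
  have hMt : Mᵀ = M := by
    rw [hMdef, Matrix.transpose_add, Matrix.transpose_one, Matrix.transpose_mul,
      Matrix.transpose_mul, Matrix.transpose_transpose, hΩt, ← Matrix.mul_assoc]
  have hdet : IsUnit M.det := isUnit_iff_ne_zero.mpr (ne_of_gt hM.det_pos)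
  have hMMinv : M * M⁻¹ = 1 := Matrix.mul_nonsing_inv M hdet
  have hMinvt : (M⁻¹)ᵀ = M⁻¹ := by rw [Matrix.transpose_nonsing_inv, hMt]
  -- abbreviations
  set a : Fin p → ℝ := A.mulVec x with ha
  set b : Fin p → ℝ := c + a with hb
  set w : Fin n → ℝ := Γᵀ.mulVec m with hw
  set u : Fin n → ℝ := Γᵀ.mulVec (Ω.mulVec a) with hu
  set v : Fin n → ℝ := w - u with hv
  set μ : Fin n → ℝ := M⁻¹.mulVec v with hμ
  have hMv : M.mulVec μ = v := by
    rw [hμ, Matrix.mulVec_mulVec, hMMinv, Matrix.one_mulVec]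
  -- dot-product symmetry helpers
  have hΩsym : ∀ y z : Fin p → ℝ, y ⬝ᵥ Ω.mulVec z = z ⬝ᵥ Ω.mulVec y := by
    intro y z; rw [dp_shift, hΩt, dotProduct_comm]
  have hMinvsym : ∀ y z : Fin n → ℝ, y ⬝ᵥ M⁻¹.mulVec z = z ⬝ᵥ M⁻¹.mulVec y := by
    intro y z; rw [dp_shift, hMinvt, dotProduct_comm]
  -- key cross-term: a ⬝ Ω Γ M⁻¹ y = u ⬝ M⁻¹ y
  have hcross : ∀ y : Fin n → ℝ,
      a ⬝ᵥ Ω.mulVec (Γ.mulVec (M⁻¹.mulVec y)) = u ⬝ᵥ M⁻¹.mulVec y := by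
    intro y
    rw [dp_shift Ω, hΩt, dp_shift Γ, hu]
  -- constant identity
  have e5 : b ⬝ᵥ Ω.mulVec b - 2 * (lam ⬝ᵥ b) = v ⬝ᵥ M⁻¹.mulVec v + γ := by
    have hγ : γ = a ⬝ᵥ Ω.mulVec a - u ⬝ᵥ M⁻¹.mulVec u - 2 * (a ⬝ᵥ m)
        + 2 * (u ⬝ᵥ M⁻¹.mulVec w) + c ⬝ᵥ Ω.mulVec c - 2 * (lam ⬝ᵥ c)
        - w ⬝ᵥ M⁻¹.mulVec w := by
      rw [hγdef]
      have t1 : a ⬝ᵥ ((Ω - Ω * Γ * M⁻¹ * Γᵀ * Ω).mulVec a)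
          = a ⬝ᵥ Ω.mulVec a - u ⬝ᵥ M⁻¹.mulVec u := by
        rw [Matrix.sub_mulVec, dotProduct_sub]
        congr 1
        rw [show (Ω * Γ * M⁻¹ * Γᵀ * Ω) = Ω * (Γ * (M⁻¹ * (Γᵀ * Ω))) by simp only [Matrix.mul_assoc],
          ← Matrix.mulVec_mulVec, ← Matrix.mulVec_mulVec, ← Matrix.mulVec_mulVec,
          ← Matrix.mulVec_mulVec, hcross, hu]
      have t2 : x ⬝ᵥ Aᵀ.mulVec ((1 - Ω * Γ * M⁻¹ * Γᵀ).mulVec m)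
          = a ⬝ᵥ m - u ⬝ᵥ M⁻¹.mulVec w := by
        rw [dp_shift Aᵀ, Matrix.transpose_transpose, ← ha, Matrix.sub_mulVec,
          dotProduct_sub, Matrix.one_mulVec]
        congr 1
        rw [show (Ω * Γ * M⁻¹ * Γᵀ) = Ω * (Γ * (M⁻¹ * Γᵀ)) by simp only [Matrix.mul_assoc],
          ← Matrix.mulVec_mulVec, ← Matrix.mulVec_mulVec, ← Matrix.mulVec_mulVec, hcross, hw]
      rw [t1, t2]; ring
    have hvv : v ⬝ᵥ M⁻¹.mulVec v
        = w ⬝ᵥ M⁻¹.mulVec w - 2 * (u ⬝ᵥ M⁻¹.mulVec w) + u ⬝ᵥ M⁻¹.mulVec u := by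
      rw [hv, sub_dotProduct, Matrix.mulVec_sub, dotProduct_sub,
        dotProduct_sub, hMinvsym w u]
      ring
    have hbb : b ⬝ᵥ Ω.mulVec b
        = c ⬝ᵥ Ω.mulVec c + 2 * (a ⬝ᵥ Ω.mulVec c) + a ⬝ᵥ Ω.mulVec a := by
      rw [hb, add_dotProduct, Matrix.mulVec_add, dotProduct_add,
        dotProduct_add, hΩsym c a]
      ring
    have hlb : lam ⬝ᵥ b = lam ⬝ᵥ c + a ⬝ᵥ lam := by
      rw [hb, dotProduct_add, dotProduct_comm lam a]
    have ham : a ⬝ᵥ m = a ⬝ᵥ lam - a ⬝ᵥ Ω.mulVec c := by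
      rw [hmdef, dotProduct_sub]
    rw [hγ, hvv, hbb, hlb, ham]
    linarith [dotProduct_comm a lam]
  -- pointwise exponent identity
  have key : ∀ ξ : Fin n → ℝ,
      ((2 * Real.pi) ^ (-(n : ℝ) / 2) * Real.exp (-(ξ ⬝ᵥ ξ) / 2)) *
          Real.exp (-(1 / 2) *
            ((c + a + Γ.mulVec ξ) ⬝ᵥ Ω.mulVec (c + a + Γ.mulVec ξ)
              - 2 * (lam ⬝ᵥ (c + a + Γ.mulVec ξ))))
      = (2 * Real.pi) ^ (-(n : ℝ) / 2) * Real.exp (-γ / 2)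
          * Real.exp (-((ξ - μ) ⬝ᵥ M.mulVec (ξ - μ)) / 2) := by
    intro ξ
    rw [mul_assoc, mul_assoc, ← Real.exp_add, ← Real.exp_add]
    congr 2
    have hz : c + a + Γ.mulVec ξ = b + Γ.mulVec ξ := by rw [hb]
    rw [hz]
    -- expand both sides
    have e1 : (ξ - μ) ⬝ᵥ M.mulVec (ξ - μ)
        = ξ ⬝ᵥ M.mulVec ξ - 2 * (ξ ⬝ᵥ v) + v ⬝ᵥ M⁻¹.mulVec v := by
      rw [sub_dotProduct, Matrix.mulVec_sub, dotProduct_sub,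
        dotProduct_sub, hMv]
      have h1 : μ ⬝ᵥ M.mulVec ξ = ξ ⬝ᵥ v := by
        rw [dp_shift, hMt, hMv, dotProduct_comm]
      have h2 : μ ⬝ᵥ v = v ⬝ᵥ M⁻¹.mulVec v := by
        rw [hμ, dotProduct_comm, hMinvsym]
      have h3 : ξ ⬝ᵥ v = ξ ⬝ᵥ v := rfl
      rw [h1, h2]
      ring
    have e2 : (b + Γ.mulVec ξ) ⬝ᵥ Ω.mulVec (b + Γ.mulVec ξ)
        = b ⬝ᵥ Ω.mulVec b + 2 * (ξ ⬝ᵥ Γᵀ.mulVec (Ω.mulVec b))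
          + (ξ ⬝ᵥ M.mulVec ξ - ξ ⬝ᵥ ξ) := by
      rw [add_dotProduct, Matrix.mulVec_add, dotProduct_add,
        dotProduct_add, hΩsym b (Γ.mulVec ξ)]
      have h1 : Γ.mulVec ξ ⬝ᵥ Ω.mulVec b = ξ ⬝ᵥ Γᵀ.mulVec (Ω.mulVec b) := by
        rw [dp_shift Γᵀ, Matrix.transpose_transpose]
      have h2 : Γ.mulVec ξ ⬝ᵥ Ω.mulVec (Γ.mulVec ξ) = ξ ⬝ᵥ M.mulVec ξ - ξ ⬝ᵥ ξ := by
        have hMξ : M.mulVec ξ = Γᵀ.mulVec (Ω.mulVec (Γ.mulVec ξ)) + ξ := by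
          rw [hMdef, Matrix.add_mulVec, Matrix.one_mulVec, ← Matrix.mulVec_mulVec,
            ← Matrix.mulVec_mulVec]
        rw [hMξ, dotProduct_add, dp_shift Γᵀ, Matrix.transpose_transpose]
        ring
      rw [h1, h2]
      ring
    have e3 : lam ⬝ᵥ (b + Γ.mulVec ξ) = lam ⬝ᵥ b + ξ ⬝ᵥ Γᵀ.mulVec lam := by
      rw [dotProduct_add]
      congr 1
      rw [dp_shift Γᵀ, Matrix.transpose_transpose, dotProduct_comm]
    have e4 : ξ ⬝ᵥ v = ξ ⬝ᵥ Γᵀ.mulVec lam - ξ ⬝ᵥ Γᵀ.mulVec (Ω.mulVec c) - ξ ⬝ᵥ u := by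
      rw [hv, hw, dotProduct_sub]
      have : Γᵀ.mulVec m = Γᵀ.mulVec lam - Γᵀ.mulVec (Ω.mulVec c) := by
        rw [hmdef, Matrix.mulVec_sub]
      rw [this, dotProduct_sub]
    have e6 : ξ ⬝ᵥ Γᵀ.mulVec (Ω.mulVec b)
        = ξ ⬝ᵥ Γᵀ.mulVec (Ω.mulVec c) + ξ ⬝ᵥ u := by
      have : Ω.mulVec b = Ω.mulVec c + Ω.mulVec a := by
        rw [hb, Matrix.mulVec_add]
      rw [this, Matrix.mulVec_add, dotProduct_add, hu]
    rw [e1, e2, e3, e6]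
    rw [e4] at *
    linarith [e5]
  -- integrate
  calc (∫ ξ : Fin n → ℝ,
        ((2 * Real.pi) ^ (-(n : ℝ) / 2) * Real.exp (-(ξ ⬝ᵥ ξ) / 2)) *
          Real.exp (-(1 / 2) *
            ((c + a + Γ.mulVec ξ) ⬝ᵥ Ω.mulVec (c + a + Γ.mulVec ξ)
              - 2 * (lam ⬝ᵥ (c + a + Γ.mulVec ξ)))))
      = ∫ ξ : Fin n → ℝ, (2 * Real.pi) ^ (-(n : ℝ) / 2) * Real.exp (-γ / 2)
          * Real.exp (-((ξ - μ) ⬝ᵥ M.mulVec (ξ - μ)) / 2) := by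
        exact integral_congr_ae (Filter.Eventually.of_forall key)
    _ = (2 * Real.pi) ^ (-(n : ℝ) / 2) * Real.exp (-γ / 2)
          * ∫ ξ : Fin n → ℝ, Real.exp (-((ξ - μ) ⬝ᵥ M.mulVec (ξ - μ)) / 2) := by
        rw [← MeasureTheory.integral_const_mul]
    _ = (2 * Real.pi) ^ (-(n : ℝ) / 2) * Real.exp (-γ / 2)
          * ∫ ξ : Fin n → ℝ, Real.exp (-(ξ ⬝ᵥ M.mulVec ξ) / 2) := by
        rw [MeasureTheory.integral_sub_right_eq_self
          (fun ξ : Fin n → ℝ => Real.exp (-(ξ ⬝ᵥ M.mulVec ξ) / 2)) μ]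
    _ = M.det ^ (-(1 : ℝ) / 2) * Real.exp (-γ / 2) := by
        rw [quad_int hM]
        rw [show (2 * Real.pi) ^ (-(n : ℝ) / 2) * Real.exp (-γ / 2) *
            ((2 * Real.pi) ^ ((n : ℝ) / 2) * M.det ^ (-(1:ℝ) / 2))
          = ((2 * Real.pi) ^ (-(n : ℝ) / 2) * (2 * Real.pi) ^ ((n : ℝ) / 2)) *
            (M.det ^ (-(1:ℝ) / 2) * Real.exp (-γ / 2)) by ring]
        rw [← Real.rpow_add (by positivity),
          show -(n:ℝ)/2 + (n:ℝ)/2 = 0 by ring, Real.rpow_zero, one_mul]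
end

section
/- Let f ∈ ℝ^p, A a real p×p matrix, F a real p×n matrix, Ω̂ a symmetric positive semidefinite real p×p matrix and λ̂ ∈ ℝ^p. Set M := Fᵀ Ω̂ F + I_n and ε := λ̂ − Ω̂ f. Then for every z ∈ ℝ^p: ∫_{ℝ^n} φ_n(ξ) · exp(−(1/2)·((f + A z + F ξ)ᵀ Ω̂ (f + A z + F ξ) − 2 λ̂ᵀ (f + A z + F ξ))) dξ = (det M)^{−1/2} · exp(−κ/2) · exp(−(1/2)·(zᵀ Ω' z − 2 λ'ᵀ z)), where Ω' = Aᵀ (I_p − Ω̂ F M⁻¹ Fᵀ) Ω̂ A, λ' = Aᵀ (I_p − Ω̂ F M⁻¹ Fᵀ) ε, and κ = fᵀ Ω̂ f − 2 λ̂ᵀ f − (Fᵀ ε)ᵀ M⁻¹ (Fᵀ ε). -/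
open Matrix MeasureTheory Real

lemma gauss_base (n : ℕ) :
    ∫ ξ : Fin n → ℝ, Real.exp (-(ξ ⬝ᵥ ξ) / 2) = (2 * π) ^ ((n : ℝ) / 2) := by
  have h1 : ∀ ξ : Fin n → ℝ, Real.exp (-(ξ ⬝ᵥ ξ) / 2)
      = ∏ i, Real.exp (-(1/2) * (ξ i) ^ 2) := by
    intro ξ
    rw [← Real.exp_sum]
    congr 1
    rw [dotProduct, neg_div, Finset.sum_div, ← Finset.sum_neg_distrib]
    exact Finset.sum_congr rfl fun i _ => by ring

  simp_rw [h1]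
  rw [MeasureTheory.integral_fintype_prod_volume_eq_pow (ι := Fin n)
    (f := fun x : ℝ => Real.exp (-(1/2) * x ^ 2))]
  have h2 : ∫ x : ℝ, Real.exp (-(1/2) * x ^ 2) = Real.sqrt (2 * π) := by
    rw [integral_gaussian]
    rw [show π / (1/2 : ℝ) = 2 * π by ring]
  rw [h2, Fintype.card_fin, Real.sqrt_eq_rpow, ← Real.rpow_natCast _ n,
    ← Real.rpow_mul (by positivity)]
  ring_nf

lemma integral_comp_mulVec {n : ℕ} (S : Matrix (Fin n) (Fin n) ℝ) (hS : S.det ≠ 0)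
    (g : (Fin n → ℝ) → ℝ) :
    ∫ ξ : Fin n → ℝ, g (S.mulVec ξ) = |S.det|⁻¹ * ∫ ξ : Fin n → ℝ, g ξ := by
  set f : (Fin n → ℝ) →ₗ[ℝ] (Fin n → ℝ) := Matrix.toLin' S with hf
  have hdet : LinearMap.det f ≠ 0 := by rwa [hf, LinearMap.det_toLin']
  let e : (Fin n → ℝ) ≃ᵐ (Fin n → ℝ) :=
    (f.equivOfDetNeZero hdet).toContinuousLinearEquiv.toHomeomorph.toMeasurableEquiv
  have he : ⇑e = ⇑f := rfl
  have hmap : Measure.map (⇑e) volume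
      = ENNReal.ofReal |(LinearMap.det f)⁻¹| • volume := by
    rw [he, Real.map_linearMap_volume_pi_eq_smul_volume_pi hdet]
  have h1 : ∀ ξ, g (S.mulVec ξ) = g (e ξ) := by
    intro ξ; rw [he, hf]; simp [Matrix.toLin'_apply]
  simp_rw [h1]
  rw [← MeasureTheory.integral_map_equiv e g, hmap, integral_smul_measure, smul_eq_mul,
    ENNReal.toReal_ofReal (abs_nonneg _)]
  rw [hf, LinearMap.det_toLin', abs_inv]

lemma dot_sym {m : ℕ} {B : Matrix (Fin m) (Fin m) ℝ} (hB : Bᵀ = B) (x y : Fin m → ℝ) :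
    x ⬝ᵥ B.mulVec y = y ⬝ᵥ B.mulVec x := by
  rw [Matrix.dotProduct_mulVec, ← Matrix.mulVec_transpose, hB, dotProduct_comm]

lemma dot_transpose {m k : ℕ} (B : Matrix (Fin m) (Fin k) ℝ) (x : Fin k → ℝ) (y : Fin m → ℝ) :
    x ⬝ᵥ Bᵀ.mulVec y = (B.mulVec x) ⬝ᵥ y := by
  rw [Matrix.dotProduct_mulVec, Matrix.vecMul_transpose]

open scoped MatrixOrder in
lemma gauss_centered {n : ℕ} (M : Matrix (Fin n) (Fin n) ℝ) (hM : M.PosDef) :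
    ∫ ξ : Fin n → ℝ, Real.exp (-(ξ ⬝ᵥ M.mulVec ξ) / 2)
      = (2 * π) ^ ((n : ℝ) / 2) * M.det ^ (-(1 : ℝ) / 2) := by
  
  set S := CFC.sqrt M with hSdef
  have hSpsd : S.PosSemidef := (CFC.sqrt_nonneg M).posSemidef
  have hSH : Sᵀ = S := by
    have := hSpsd.1
    rwa [Matrix.IsHermitian, Matrix.conjTranspose_eq_transpose_of_trivial] at this
  have hSS : S * S = M := CFC.sqrt_mul_sqrt_self M hM.posSemidef.nonneg
  have hdet2 : S.det * S.det = M.det := by rw [← Matrix.det_mul, hSS]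
  have hdetn : 0 ≤ S.det := by
    exact hSpsd.det_nonneg
  have hMdet : 0 < M.det := hM.det_pos
  have hSdet : S.det ≠ 0 := by
    intro h; rw [h, mul_zero] at hdet2; exact hMdet.ne' hdet2.symm
  have key : ∀ ξ : Fin n → ℝ, ξ ⬝ᵥ M.mulVec ξ = (S.mulVec ξ) ⬝ᵥ (S.mulVec ξ) := by
    intro ξ
    rw [← hSS, ← Matrix.mulVec_mulVec, ← dot_transpose, hSH]
  simp_rw [key]
  have := integral_comp_mulVec S hSdet (fun η => Real.exp (-(η ⬝ᵥ η) / 2))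
  rw [this, gauss_base]
  have hMS : M.det = S.det ^ 2 := by rw [sq]; exact hdet2.symm
  have h12 : M.det ^ (-(1:ℝ)/2) = S.det⁻¹ := by
    rw [show (-(1:ℝ)/2) = -(1/2) by norm_num, Real.rpow_neg hMdet.le, ← Real.sqrt_eq_rpow,
      hMS, Real.sqrt_sq hdetn]
  rw [abs_of_nonneg hdetn, h12]
  ring

lemma gauss_full {n : ℕ} (M : Matrix (Fin n) (Fin n) ℝ) (hM : M.PosDef) (b : Fin n → ℝ) :
    ∫ ξ : Fin n → ℝ, Real.exp (-(ξ ⬝ᵥ M.mulVec ξ) / 2 + b ⬝ᵥ ξ)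
      = (2 * π) ^ ((n : ℝ) / 2) * M.det ^ (-(1 : ℝ) / 2)
          * Real.exp ((b ⬝ᵥ M⁻¹.mulVec b) / 2) := by
  have hMT : Mᵀ = M := by
    have := hM.1; rwa [Matrix.IsHermitian, Matrix.conjTranspose_eq_transpose_of_trivial] at this
  have hMinvT : (M⁻¹)ᵀ = M⁻¹ := by rw [Matrix.transpose_nonsing_inv, hMT]
  have hunit : IsUnit M.det := hM.det_pos.ne'.isUnit
  set c : Fin n → ℝ := M⁻¹.mulVec b with hc
  have hMc : M.mulVec c = b := by
    rw [hc, Matrix.mulVec_mulVec, Matrix.mul_nonsing_inv _ hunit, Matrix.one_mulVec]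
  have key : ∀ ξ : Fin n → ℝ, -(ξ ⬝ᵥ M.mulVec ξ) / 2 + b ⬝ᵥ ξ
      = (b ⬝ᵥ M⁻¹.mulVec b) / 2 + (-((ξ - c) ⬝ᵥ M.mulVec (ξ - c)) / 2) := by
    intro ξ
    have e1 : (ξ - c) ⬝ᵥ M.mulVec (ξ - c)
        = ξ ⬝ᵥ M.mulVec ξ - ξ ⬝ᵥ M.mulVec c - c ⬝ᵥ M.mulVec ξ + c ⬝ᵥ M.mulVec c := by
      rw [Matrix.mulVec_sub, sub_dotProduct, dotProduct_sub,
        dotProduct_sub]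
      ring
    have e2 : c ⬝ᵥ M.mulVec ξ = ξ ⬝ᵥ M.mulVec c := dot_sym hMT c ξ
    have e3 : ξ ⬝ᵥ M.mulVec c = b ⬝ᵥ ξ := by rw [hMc, dotProduct_comm]
    have e4 : c ⬝ᵥ M.mulVec c = b ⬝ᵥ M⁻¹.mulVec b := by
      rw [hMc, hc, dotProduct_comm]
    rw [e1, e2, e3, e4]; ring
  simp_rw [key, Real.exp_add, MeasureTheory.integral_const_mul]
  rw [show ∫ ξ : Fin n → ℝ, Real.exp (-((ξ - c) ⬝ᵥ M.mulVec (ξ - c)) / 2)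
      = ∫ ξ : Fin n → ℝ, Real.exp (-(ξ ⬝ᵥ M.mulVec ξ) / 2) from
    MeasureTheory.integral_sub_right_eq_self (fun ξ => Real.exp (-(ξ ⬝ᵥ M.mulVec ξ) / 2)) c,
    gauss_centered M hM]
  ring

/-- Backward prediction step of the Rao-Blackwellized backward information filter
for the hierarchical CLG model: the linear state evolves as `z⁺ = f + A z + F ξ`
with `ξ` standard Gaussian. -/
theorem rbps_hier_backward_prediction
    (p n : ℕ) (f : Fin p → ℝ) (A : Matrix (Fin p) (Fin p) ℝ)
    (F : Matrix (Fin p) (Fin n) ℝ)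
    (Ωhat : Matrix (Fin p) (Fin p) ℝ) (hΩ : Ωhat.PosSemidef)
    (lamHat : Fin p → ℝ) :
    let M : Matrix (Fin n) (Fin n) ℝ := Fᵀ * Ωhat * F + 1
    let ε : Fin p → ℝ := lamHat - Ωhat.mulVec f
    let Ω' : Matrix (Fin p) (Fin p) ℝ := Aᵀ * (1 - Ωhat * F * M⁻¹ * Fᵀ) * Ωhat * A
    let lam' : Fin p → ℝ := Aᵀ.mulVec ((1 - Ωhat * F * M⁻¹ * Fᵀ).mulVec ε)
    let κ : ℝ := f ⬝ᵥ Ωhat.mulVec f - 2 * (lamHat ⬝ᵥ f)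
        - (Fᵀ.mulVec ε) ⬝ᵥ (M⁻¹.mulVec (Fᵀ.mulVec ε))
    ∀ z : Fin p → ℝ,
      (∫ ξ : Fin n → ℝ,
          ((2 * Real.pi) ^ (-(n : ℝ) / 2) * Real.exp (-(ξ ⬝ᵥ ξ) / 2)) *
            Real.exp (-(1 / 2) *
              ((f + A.mulVec z + F.mulVec ξ) ⬝ᵥ
                  Ωhat.mulVec (f + A.mulVec z + F.mulVec ξ)
                - 2 * (lamHat ⬝ᵥ (f + A.mulVec z + F.mulVec ξ)))))
        = M.det ^ (-(1 : ℝ) / 2) * Real.exp (-κ / 2) *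
            Real.exp (-(1 / 2) * (z ⬝ᵥ Ω'.mulVec z - 2 * (lam' ⬝ᵥ z))) := by
  intro M ε Ω' lam' κ z
  have hMdef : M = Fᵀ * Ωhat * F + 1 := rfl
  have hεdef : ε = lamHat - Ωhat.mulVec f := rfl
  have hΩ'def : Ω' = Aᵀ * (1 - Ωhat * F * M⁻¹ * Fᵀ) * Ωhat * A := rfl
  have hlam'def : lam' = Aᵀ.mulVec ((1 - Ωhat * F * M⁻¹ * Fᵀ).mulVec ε) := rfl
  have hκdef : κ = f ⬝ᵥ Ωhat.mulVec f - 2 * (lamHat ⬝ᵥ f)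
      - (Fᵀ.mulVec ε) ⬝ᵥ (M⁻¹.mulVec (Fᵀ.mulVec ε)) := rfl
  clear_value M ε Ω' lam' κ
  -- basic symmetry facts
  have hΩT : Ωhatᵀ = Ωhat := by
    have := hΩ.1
    rwa [Matrix.IsHermitian, Matrix.conjTranspose_eq_transpose_of_trivial] at this
  have hpsd : (Fᵀ * Ωhat * F).PosSemidef := by
    have := hΩ.conjTranspose_mul_mul_same F
    rwa [Matrix.conjTranspose_eq_transpose_of_trivial] at this
  have hMpd : M.PosDef := by rw [hMdef]; exact Matrix.PosDef.posSemidef_add hpsd Matrix.PosDef.one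
  have hMT : Mᵀ = M := by
    rw [hMdef, Matrix.transpose_add, Matrix.transpose_one, Matrix.transpose_mul,
      Matrix.transpose_mul, Matrix.transpose_transpose, hΩT, Matrix.mul_assoc]
  have hMinvT : (M⁻¹)ᵀ = M⁻¹ := by rw [Matrix.transpose_nonsing_inv, hMT]
  -- abbreviations
  set w : Fin p → ℝ := A.mulVec z with hw
  set a : Fin p → ℝ := f + A.mulVec z with ha
  set b : Fin n → ℝ := Fᵀ.mulVec (lamHat - Ωhat.mulVec a) with hb
  set u : Fin n → ℝ := Fᵀ.mulVec ε with hu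
  set v2 : Fin n → ℝ := Fᵀ.mulVec (Ωhat.mulVec w) with hv2
  set C : ℝ := ((a ⬝ᵥ Ωhat.mulVec a) - 2 * (lamHat ⬝ᵥ a)) / 2 with hC
  -- Step 1: pointwise identity for the integrand
  have hpt : ∀ ξ : Fin n → ℝ,
      ((2 * Real.pi) ^ (-(n : ℝ) / 2) * Real.exp (-(ξ ⬝ᵥ ξ) / 2)) *
        Real.exp (-(1 / 2) *
          ((a + F.mulVec ξ) ⬝ᵥ Ωhat.mulVec (a + F.mulVec ξ)
            - 2 * (lamHat ⬝ᵥ (a + F.mulVec ξ))))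
      = ((2 * Real.pi) ^ (-(n : ℝ) / 2) * Real.exp (-C)) *
          Real.exp (-(ξ ⬝ᵥ M.mulVec ξ) / 2 + b ⬝ᵥ ξ) := by
    intro ξ
    set v : Fin p → ℝ := F.mulVec ξ with hv
    have q1 : (a + v) ⬝ᵥ Ωhat.mulVec (a + v)
        = a ⬝ᵥ Ωhat.mulVec a + 2 * (a ⬝ᵥ Ωhat.mulVec v) + v ⬝ᵥ Ωhat.mulVec v := by
      rw [Matrix.mulVec_add, add_dotProduct, dotProduct_add,
        dotProduct_add, dot_sym hΩT v a]
      ring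
    have q2 : lamHat ⬝ᵥ (a + v) = lamHat ⬝ᵥ a + lamHat ⬝ᵥ v := dotProduct_add _ _ _
    have q3 : ξ ⬝ᵥ M.mulVec ξ = v ⬝ᵥ Ωhat.mulVec v + ξ ⬝ᵥ ξ := by
      rw [hMdef, Matrix.add_mulVec, Matrix.one_mulVec, dotProduct_add,
        ← Matrix.mulVec_mulVec, ← Matrix.mulVec_mulVec, dot_transpose, ← hv]
    have q4 : b ⬝ᵥ ξ = lamHat ⬝ᵥ v - a ⬝ᵥ Ωhat.mulVec v := by
      rw [dotProduct_comm, hb, dot_transpose, ← hv, dotProduct_sub,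
        dotProduct_comm v lamHat, dot_sym hΩT v a]
    rw [mul_assoc, mul_assoc, ← Real.exp_add, ← Real.exp_add]
    congr 2
    rw [q1, q2, q3, q4, hC]
    ring
  simp_rw [hpt]
  rw [MeasureTheory.integral_const_mul, gauss_full M hMpd b]
  -- Step 2: the exponent identity
  have hbd : b = u - v2 := by
    rw [hb, hu, hv2, ← Matrix.mulVec_sub, ha, hεdef, hw, Matrix.mulVec_add,
      sub_add_eq_sub_sub]
  have s1 : b ⬝ᵥ M⁻¹.mulVec b
      = u ⬝ᵥ M⁻¹.mulVec u - 2 * (u ⬝ᵥ M⁻¹.mulVec v2) + v2 ⬝ᵥ M⁻¹.mulVec v2 := by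
    rw [hbd, Matrix.mulVec_sub, sub_dotProduct, dotProduct_sub,
      dotProduct_sub, dot_sym hMinvT v2 u]
    ring
  have s2 : a ⬝ᵥ Ωhat.mulVec a
      = f ⬝ᵥ Ωhat.mulVec f + 2 * (f ⬝ᵥ Ωhat.mulVec w) + w ⬝ᵥ Ωhat.mulVec w := by
    rw [ha, ← hw, Matrix.mulVec_add, add_dotProduct, dotProduct_add,
      dotProduct_add, dot_sym hΩT w f]
    ring
  have s2b : lamHat ⬝ᵥ a = lamHat ⬝ᵥ f + lamHat ⬝ᵥ w := by
    rw [ha, ← hw, dotProduct_add]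
  have hKΩ : (Ωhat * F * M⁻¹ * Fᵀ).mulVec (Ωhat.mulVec w)
      = Ωhat.mulVec (F.mulVec (M⁻¹.mulVec v2)) := by
    rw [hv2, ← Matrix.mulVec_mulVec, ← Matrix.mulVec_mulVec, ← Matrix.mulVec_mulVec]
  have hKε : (Ωhat * F * M⁻¹ * Fᵀ).mulVec ε
      = Ωhat.mulVec (F.mulVec (M⁻¹.mulVec u)) := by
    rw [hu, ← Matrix.mulVec_mulVec, ← Matrix.mulVec_mulVec, ← Matrix.mulVec_mulVec]
  have hcross : ∀ t : Fin n → ℝ, w ⬝ᵥ Ωhat.mulVec (F.mulVec (M⁻¹.mulVec t))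
      = t ⬝ᵥ M⁻¹.mulVec v2 := by
    intro t
    rw [dot_sym hΩT w, ← dot_transpose, dotProduct_comm, dot_sym hMinvT, ← hv2]
  have s4 : z ⬝ᵥ Ω'.mulVec z = w ⬝ᵥ Ωhat.mulVec w - v2 ⬝ᵥ M⁻¹.mulVec v2 := by
    rw [hΩ'def, ← Matrix.mulVec_mulVec, ← Matrix.mulVec_mulVec, ← Matrix.mulVec_mulVec,
      dot_transpose, ← hw, Matrix.sub_mulVec, Matrix.one_mulVec, hKΩ,
      dotProduct_sub, hcross v2]
  have s5 : lam' ⬝ᵥ z = ε ⬝ᵥ w - u ⬝ᵥ M⁻¹.mulVec v2 := by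
    rw [hlam'def, dotProduct_comm, dot_transpose, ← hw, Matrix.sub_mulVec,
      Matrix.one_mulVec, hKε, dotProduct_sub, hcross u, dotProduct_comm w ε]
  have s6 : ε ⬝ᵥ w = lamHat ⬝ᵥ w - f ⬝ᵥ Ωhat.mulVec w := by
    rw [hεdef, sub_dotProduct,
      dotProduct_comm (Ωhat.mulVec f) w, dot_sym hΩT w f]
  have hκ : κ = f ⬝ᵥ Ωhat.mulVec f - 2 * (lamHat ⬝ᵥ f) - u ⬝ᵥ M⁻¹.mulVec u := by
    rw [hκdef, hu]
  -- final assembly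
  have hexp : Real.exp (-C) * Real.exp ((b ⬝ᵥ M⁻¹.mulVec b) / 2)
      = Real.exp (-κ / 2) * Real.exp (-(1 / 2) * (z ⬝ᵥ Ω'.mulVec z - 2 * (lam' ⬝ᵥ z))) := by
    rw [← Real.exp_add, ← Real.exp_add]
    congr 1
    rw [hC, s1, s2, s2b, s4, s5, s6, hκ]
    ring
  have hpow : (2 * Real.pi) ^ (-(n : ℝ) / 2) * (2 * Real.pi) ^ ((n : ℝ) / 2) = 1 := by
    rw [← Real.rpow_add (by positivity), show (-(n:ℝ)/2 + (n:ℝ)/2) = 0 by ring,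
      Real.rpow_zero]
  calc (2 * Real.pi) ^ (-(n : ℝ) / 2) * Real.exp (-C) *
        ((2 * Real.pi) ^ ((n : ℝ) / 2) * M.det ^ (-(1:ℝ) / 2) *
          Real.exp ((b ⬝ᵥ M⁻¹.mulVec b) / 2))
      = ((2 * Real.pi) ^ (-(n : ℝ) / 2) * (2 * Real.pi) ^ ((n : ℝ) / 2)) *
          M.det ^ (-(1:ℝ) / 2) *
          (Real.exp (-C) * Real.exp ((b ⬝ᵥ M⁻¹.mulVec b) / 2)) := by ring
    _ = M.det ^ (-(1 : ℝ) / 2) * Real.exp (-κ / 2) *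
          Real.exp (-(1 / 2) * (z ⬝ᵥ Ω'.mulVec z - 2 * (lam' ⬝ᵥ z))) := by
        rw [hpow, hexp]; ring
end

section
/- Let Q := G Gᵀ be symmetric positive definite where G is a real m×n matrix, let Ω̂ be a symmetric positive semidefinite real p×p matrix, λ̂ ∈ ℝ^p, f ∈ ℝ^p, g, u⁺ ∈ ℝ^m, A a real p×p matrix, B a real m×p matrix, and F a real p×n matrix. Define L := I_n − Gᵀ Q⁻¹ G, f̄ := f + F Gᵀ Q⁻¹ (u⁺ − g), Ā := A − F Gᵀ Q⁻¹ B, M := L Fᵀ Ω̂ F L + I_n, Ψ := L M⁻¹ L, and ε := λ̂ − Ω̂ f̄. Then for every z ∈ ℝ^p: (det Q)^{−1/2} exp(−(1/2)(u⁺ − g − B z)ᵀ Q⁻¹ (u⁺ − g − B z)) · ∫_{ℝ^n} φ_n(ξ) exp(−(1/2)((f̄ + Ā z + F L ξ)ᵀ Ω̂ (f̄ + Ā z + F L ξ) − 2 λ̂ᵀ (f̄ + Ā z + F L ξ))) dξ = Z · exp(−(1/2)(zᵀ Ω z − 2 λᵀ z)), where Z = (det Q)^{−1/2} (det M)^{−1/2}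 exp(−τ/2), τ = (u⁺ − g)ᵀ Q⁻¹ (u⁺ − g) + f̄ᵀ Ω̂ f̄ − 2 λ̂ᵀ f̄ − (Fᵀ ε)ᵀ Ψ (Fᵀ ε), Ω = Āᵀ (I_p − Ω̂ F Ψ Fᵀ) Ω̂ Ā + Bᵀ Q⁻¹ B, and λ = Āᵀ (I_p − Ω̂ F Ψ Fᵀ) ε + Bᵀ Q⁻¹ (u⁺ − g). -/
open Matrix MeasureTheory Real

lemma dp_swap {a b : ℕ} (A : Matrix (Fin a) (Fin b) ℝ) (x : Fin a → ℝ) (y : Fin b → ℝ) :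
    x ⬝ᵥ A.mulVec y = Aᵀ.mulVec x ⬝ᵥ y := by
  rw [Matrix.dotProduct_mulVec, ← Matrix.mulVec_transpose]

lemma dp_sym {a : ℕ} {A : Matrix (Fin a) (Fin a) ℝ} (hA : Aᵀ = A) (x y : Fin a → ℝ) :
    x ⬝ᵥ A.mulVec y = y ⬝ᵥ A.mulVec x := by
  rw [dp_swap, hA, dotProduct_comm]

lemma int1d (c : ℝ) : ∫ x : ℝ, Real.exp (-(1/2) * x^2 + c*x)
    = Real.sqrt (2*π) * Real.exp (c^2/2) := by
  have h : ∀ x : ℝ, -(1/2) * x^2 + c*x = -(1/2)*(x - c)^2 + c^2/2 := by intro x; ring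
  simp_rw [h, Real.exp_add]
  rw [integral_mul_const, integral_sub_right_eq_self (fun x => Real.exp (-(1/2)*x^2)) c]
  have : ∀ x : ℝ, -(1/2 : ℝ)*x^2 = -(1/2)*x^2 := fun _ => rfl
  rw [show (fun x : ℝ => Real.exp (-(1/2)*x^2)) = fun x : ℝ => Real.exp (-(1/2 : ℝ)*x^2) from rfl]
  rw [integral_gaussian (1/2)]
  norm_num [mul_comm]

lemma integrable1d (c : ℝ) : Integrable (fun x : ℝ => Real.exp (-(1/2) * x^2 + c*x)) := by
  have h : ∀ x : ℝ, -(1/2) * x^2 + c*x = -(1/2)*(x - c)^2 + c^2/2 := by intro x; ring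
  simp_rw [h, Real.exp_add]
  apply Integrable.mul_const
  have h2 : Integrable (fun x : ℝ => Real.exp (-(1/2)*x^2)) := by
    simpa using integrable_exp_neg_mul_sq (by norm_num : (0:ℝ) < 1/2)
  exact h2.comp_sub_right c

lemma intPi (k : ℕ) (c : Fin k → ℝ) :
    ∫ v : Fin k → ℝ, Real.exp (∑ i, (-(1/2) * (v i)^2 + c i * v i))
      = (2*π) ^ ((k:ℝ)/2) * Real.exp ((∑ i, (c i)^2)/2) := by
  simp_rw [Real.exp_sum]
  rw [integral_fintype_prod_volume_eq_prod (f := fun i (x:ℝ) => Real.exp (-(1/2) * x^2 + c i * x))]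
  simp_rw [int1d]
  rw [Finset.prod_mul_distrib, Finset.prod_const, ← Real.exp_sum, Finset.card_univ,
    Fintype.card_fin]
  congr 1
  · rw [show Real.sqrt (2*π) = (2*π) ^ ((1:ℝ)/2) from Real.sqrt_eq_rpow _,
      ← Real.rpow_natCast ((2*π) ^ ((1:ℝ)/2)) k, ← Real.rpow_mul (by positivity)]
    congr 1
    ring
  · rw [Finset.sum_div]

lemma integrablePi (k : ℕ) (c : Fin k → ℝ) :
    Integrable (fun v : Fin k → ℝ => Real.exp (∑ i, (-(1/2) * (v i)^2 + c i * v i))) := by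
  simp_rw [Real.exp_sum]
  exact Integrable.fintype_prod (f := fun i (x:ℝ) => Real.exp (-(1/2) * x^2 + c i * x))
    (fun i => integrable1d (c i))

lemma integral_comp_mulVec_s9 {k : ℕ} (A : Matrix (Fin k) (Fin k) ℝ) (hA : A.det ≠ 0)
    (f : (Fin k → ℝ) → ℝ) :
    ∫ x : Fin k → ℝ, f (A.mulVec x) = |A.det|⁻¹ * ∫ y, f y := by
  have hdet : LinearMap.det (Matrix.toLin' A) ≠ 0 := by
    rwa [LinearMap.det_toLin']
  have hmap : Measure.map (Matrix.toLin' A) volume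
      = ENNReal.ofReal |(LinearMap.det (Matrix.toLin' A))⁻¹| • volume :=
    Real.map_linearMap_volume_pi_eq_smul_volume_pi hdet
  have hunit : IsUnit A := isUnit_iff_isUnit_det A |>.2 (isUnit_iff_ne_zero.2 hA)
  have hinv : Invertible A := hunit.invertible
  let e : (Fin k → ℝ) ≃ₗ[ℝ] (Fin k → ℝ) := Matrix.toLinearEquiv' A hinv
  have he : ⇑(Matrix.toLin' A) = ⇑e := rfl
  have hme : MeasurableEmbedding (⇑(Matrix.toLin' A)) := by
    rw [he]
    exact (e.toContinuousLinearEquiv.toHomeomorph).measurableEmbedding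
  have h1 : ∫ x : Fin k → ℝ, f (A.mulVec x) = ∫ y, f y ∂(Measure.map (Matrix.toLin' A) volume) := by
    rw [hme.integral_map]
    simp [Matrix.toLin'_apply]
  rw [h1, hmap, integral_smul_measure]
  rw [ENNReal.toReal_ofReal (abs_nonneg _), LinearMap.det_toLin', abs_inv]
  simp [smul_eq_mul]

lemma gauss_integral {k : ℕ} (S : Matrix (Fin k) (Fin k) ℝ) (hS : S.PosDef) (b : Fin k → ℝ) :
    ∫ ξ : Fin k → ℝ, Real.exp (-(1/2) * (ξ ⬝ᵥ S.mulVec ξ) + b ⬝ᵥ ξ)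
      = (2*π) ^ ((k:ℝ)/2) * S.det ^ (-(1:ℝ)/2) * Real.exp ((1/2) * (b ⬝ᵥ S⁻¹.mulVec b)) := by
  classical
  open scoped MatrixOrder in
  set C := CFC.sqrt S with hCdef
  open scoped MatrixOrder in
  have hCpsd : C.PosSemidef := (CFC.sqrt_nonneg S).posSemidef
  have hCsym : Cᵀ = C := by
    have := hCpsd.isHermitian
    simpa [Matrix.IsHermitian, Matrix.conjTranspose_eq_transpose_of_trivial] using this
  open scoped MatrixOrder in
  have hCC : C * C = S := CFC.sqrt_mul_sqrt_self S hS.posSemidef.nonneg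
  have hdet2 : C.det * C.det = S.det := by rw [← Matrix.det_mul, hCC]
  have hCdetne : C.det ≠ 0 := by
    intro h
    have := hS.det_pos
    rw [← hdet2, h, mul_zero] at this
    exact lt_irrefl _ this
  have hCinvdet : C⁻¹.det ≠ 0 := by
    simp [Matrix.det_nonsing_inv, Ring.inverse_eq_inv', hCdetne]
  have hCiT : (C⁻¹)ᵀ = C⁻¹ := by rw [Matrix.transpose_nonsing_inv, hCsym]
  have hCiC : C⁻¹ * C = 1 := Matrix.nonsing_inv_mul C (by simpa using hCdetne)
  have hCCi : C * C⁻¹ = 1 := Matrix.mul_nonsing_inv C (by simpa using hCdetne)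
  have key := integral_comp_mulVec_s9 C⁻¹ hCinvdet
    (fun ξ => Real.exp (-(1/2) * (ξ ⬝ᵥ S.mulVec ξ) + b ⬝ᵥ ξ))
  have hpt : ∀ x : Fin k → ℝ,
      Real.exp (-(1/2) * ((C⁻¹.mulVec x) ⬝ᵥ S.mulVec (C⁻¹.mulVec x)) + b ⬝ᵥ C⁻¹.mulVec x)
      = Real.exp (∑ i, (-(1/2) * (x i)^2 + (C⁻¹.mulVec b) i * x i)) := by
    intro x
    congr 1
    have h1 : (C⁻¹.mulVec x) ⬝ᵥ S.mulVec (C⁻¹.mulVec x) = x ⬝ᵥ x := by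
      rw [Matrix.mulVec_mulVec, ← hCC, Matrix.mul_assoc, hCCi, Matrix.mul_one]
      rw [dp_swap C (C⁻¹.mulVec x) x, Matrix.mulVec_mulVec, hCsym, hCCi, Matrix.one_mulVec]
    have h2 : b ⬝ᵥ C⁻¹.mulVec x = C⁻¹.mulVec b ⬝ᵥ x := by
      rw [dp_swap C⁻¹ b x, hCiT]
    rw [h1, h2]
    simp [dotProduct, Finset.sum_add_distrib, Finset.mul_sum, pow_two, mul_assoc,
      ← Finset.sum_neg_distrib]
  rw [show (fun ξ : Fin k → ℝ => Real.exp (-(1/2) * (ξ ⬝ᵥ S.mulVec ξ) + b ⬝ᵥ ξ))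
      = fun ξ => (fun y => Real.exp (-(1/2) * (y ⬝ᵥ S.mulVec y) + b ⬝ᵥ y)) ξ from rfl] at key
  have lhs_eq : ∫ x : Fin k → ℝ,
      Real.exp (-(1/2) * ((C⁻¹.mulVec x) ⬝ᵥ S.mulVec (C⁻¹.mulVec x)) + b ⬝ᵥ C⁻¹.mulVec x)
      = (2*π) ^ ((k:ℝ)/2) * Real.exp ((∑ i, ((C⁻¹.mulVec b) i)^2)/2) := by
    simp_rw [hpt]
    exact intPi k _
  rw [lhs_eq] at key
  beta_reduce at key
  have hsum : (∑ i, ((C⁻¹.mulVec b) i)^2) = b ⬝ᵥ S⁻¹.mulVec b := by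
    have h4 : (∑ i, ((C⁻¹.mulVec b) i)^2) = (C⁻¹.mulVec b) ⬝ᵥ (C⁻¹.mulVec b) := by
      simp [dotProduct, pow_two]
    have hS' : b ⬝ᵥ S⁻¹.mulVec b = (C⁻¹.mulVec b) ⬝ᵥ (C⁻¹.mulVec b) := by
      rw [← hCC, Matrix.mul_inv_rev, ← Matrix.mulVec_mulVec, dp_swap C⁻¹ b _, hCiT]
    rw [h4, hS']
  have habs : |C⁻¹.det|⁻¹ ≠ 0 := by simpa using hCinvdet
  have : ∫ y : Fin k → ℝ, Real.exp (-(1/2) * (y ⬝ᵥ S.mulVec y) + b ⬝ᵥ y)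
      = |C⁻¹.det| * ((2*π) ^ ((k:ℝ)/2) * Real.exp ((∑ i, ((C⁻¹.mulVec b) i)^2)/2)) := by
    rw [key, ← mul_assoc, mul_inv_cancel₀ (abs_ne_zero.2 hCinvdet), one_mul]
  rw [this, hsum]
  have hdetfin : |C⁻¹.det| = S.det ^ (-(1:ℝ)/2) := by
    have h3 : S.det = |C.det|^2 := by rw [← hdet2, sq_abs, pow_two]
    rw [h3, Matrix.det_nonsing_inv, Ring.inverse_eq_inv', abs_inv,
      ← Real.rpow_natCast |C.det| 2, ← Real.rpow_mul (abs_nonneg _)]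
    norm_num
    rw [Real.rpow_neg_one]
  rw [hdetfin, show (1/2 : ℝ) * (b ⬝ᵥ S⁻¹.mulVec b) = (b ⬝ᵥ S⁻¹.mulVec b)/2 by ring]
  ring

lemma dp_swap' {a b : ℕ} (A : Matrix (Fin a) (Fin b) ℝ) (x : Fin b → ℝ) (y : Fin a → ℝ) :
    A.mulVec x ⬝ᵥ y = x ⬝ᵥ Aᵀ.mulVec y := by
  rw [dp_swap Aᵀ x y, Matrix.transpose_transpose]

lemma mul_exp_shuffle (Qd Md a b c d e : ℝ) (h : a + b + c = d + e) :
    Qd * Real.exp a * (Real.exp b * (Md * Real.exp c)) = Qd * Md * Real.exp d * Real.exp e := by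
  have h2 : Real.exp a * Real.exp b * Real.exp c = Real.exp d * Real.exp e := by
    rw [← Real.exp_add, ← Real.exp_add, ← Real.exp_add, h]
  calc Qd * Real.exp a * (Real.exp b * (Md * Real.exp c))
      = Qd * Md * (Real.exp a * Real.exp b * Real.exp c) := by ring
    _ = Qd * Md * (Real.exp d * Real.exp e) := by rw [h2]
    _ = Qd * Md * Real.exp d * Real.exp e := by ring

/-- Backward prediction step of the Rao-Blackwellized backward information filter
for the mixed linear/nonlinear CLG model, after Gram–Schmidt decorrelation of the
process noise. -/
theorem rbps_mixed_backward_prediction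
    (m n p : ℕ) (G : Matrix (Fin m) (Fin n) ℝ) (hQ : (G * Gᵀ).PosDef)
    (Ωhat : Matrix (Fin p) (Fin p) ℝ) (hΩ : Ωhat.PosSemidef)
    (lamHat f : Fin p → ℝ) (g uplus : Fin m → ℝ)
    (A : Matrix (Fin p) (Fin p) ℝ) (B : Matrix (Fin m) (Fin p) ℝ)
    (F : Matrix (Fin p) (Fin n) ℝ) :
    let Q : Matrix (Fin m) (Fin m) ℝ := G * Gᵀ
    let L : Matrix (Fin n) (Fin n) ℝ := 1 - Gᵀ * Q⁻¹ * G
    let fbar : Fin p → ℝ := f + (F * Gᵀ * Q⁻¹).mulVec (uplus - g)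
    let Abar : Matrix (Fin p) (Fin p) ℝ := A - F * Gᵀ * Q⁻¹ * B
    let M : Matrix (Fin n) (Fin n) ℝ := L * Fᵀ * Ωhat * F * L + 1
    let Ψ : Matrix (Fin n) (Fin n) ℝ := L * M⁻¹ * L
    let ε : Fin p → ℝ := lamHat - Ωhat.mulVec fbar
    let τ : ℝ := (uplus - g) ⬝ᵥ Q⁻¹.mulVec (uplus - g)
        + fbar ⬝ᵥ Ωhat.mulVec fbar - 2 * (lamHat ⬝ᵥ fbar)
        - (Fᵀ.mulVec ε) ⬝ᵥ (Ψ.mulVec (Fᵀ.mulVec ε))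
    let Z : ℝ := Q.det ^ (-(1 : ℝ) / 2) * M.det ^ (-(1 : ℝ) / 2) * Real.exp (-τ / 2)
    let Ω : Matrix (Fin p) (Fin p) ℝ :=
      Abarᵀ * (1 - Ωhat * F * Ψ * Fᵀ) * Ωhat * Abar + Bᵀ * Q⁻¹ * B
    let lam : Fin p → ℝ :=
      Abarᵀ.mulVec ((1 - Ωhat * F * Ψ * Fᵀ).mulVec ε)
        + Bᵀ.mulVec (Q⁻¹.mulVec (uplus - g))
    ∀ z : Fin p → ℝ,
      Q.det ^ (-(1 : ℝ) / 2) *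
        Real.exp (-(1 / 2) *
          ((uplus - g - B.mulVec z) ⬝ᵥ Q⁻¹.mulVec (uplus - g - B.mulVec z))) *
        (∫ ξ : Fin n → ℝ,
          ((2 * Real.pi) ^ (-(n : ℝ) / 2) * Real.exp (-(ξ ⬝ᵥ ξ) / 2)) *
            Real.exp (-(1 / 2) *
              ((fbar + Abar.mulVec z + (F * L).mulVec ξ) ⬝ᵥ
                  Ωhat.mulVec (fbar + Abar.mulVec z + (F * L).mulVec ξ)
                - 2 * (lamHat ⬝ᵥ (fbar + Abar.mulVec z + (F * L).mulVec ξ)))))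
      = Z * Real.exp (-(1 / 2) * (z ⬝ᵥ Ω.mulVec z - 2 * (lam ⬝ᵥ z))) := by
  intro Q L fbar Abar M Ψ ε τ Z Ω lam z
  have hQdef : Q = G * Gᵀ := rfl
  have hLdef : L = 1 - Gᵀ * Q⁻¹ * G := rfl
  have hMdef : M = L * Fᵀ * Ωhat * F * L + 1 := rfl
  have hΨdef : Ψ = L * M⁻¹ * L := rfl
  have hεdef : ε = lamHat - Ωhat.mulVec fbar := rfl
  have hτ : τ = (uplus - g) ⬝ᵥ Q⁻¹.mulVec (uplus - g) + fbar ⬝ᵥ Ωhat.mulVec fbar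
      - 2 * (lamHat ⬝ᵥ fbar) - (Fᵀ.mulVec ε) ⬝ᵥ Ψ.mulVec (Fᵀ.mulVec ε) := rfl
  have hZ : Z = Q.det ^ (-(1:ℝ)/2) * M.det ^ (-(1:ℝ)/2) * Real.exp (-τ/2) := rfl
  have hΩdef : Ω = Abarᵀ * (1 - Ωhat * F * Ψ * Fᵀ) * Ωhat * Abar + Bᵀ * Q⁻¹ * B := rfl
  have hlamdef : lam = Abarᵀ.mulVec ((1 - Ωhat * F * Ψ * Fᵀ).mulVec ε)
      + Bᵀ.mulVec (Q⁻¹.mulVec (uplus - g)) := rfl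
  clear_value lam Ω Z τ ε Ψ M Abar fbar L Q
  -- basic symmetry facts
  have hQT : Qᵀ = Q := by
    rw [hQdef, Matrix.transpose_mul, Matrix.transpose_transpose]
  have hQiT : (Q⁻¹)ᵀ = Q⁻¹ := by rw [Matrix.transpose_nonsing_inv, hQT]
  have hΩT : Ωhatᵀ = Ωhat := by
    have := hΩ.isHermitian
    simpa [Matrix.IsHermitian] using this
  have hLT : Lᵀ = L := by
    rw [hLdef]
    simp [Matrix.transpose_sub, Matrix.transpose_mul, hQiT, Matrix.mul_assoc]
  have hMT : Mᵀ = M := by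
    rw [hMdef, Matrix.transpose_add, Matrix.transpose_one]
    congr 1
    simp only [Matrix.transpose_mul, Matrix.transpose_transpose, hLT, hΩT]
    simp [Matrix.mul_assoc]
  have hquad : ∀ x : Fin n → ℝ, x ⬝ᵥ (L * Fᵀ * Ωhat * F * L).mulVec x
      = ((F * L).mulVec x) ⬝ᵥ Ωhat.mulVec ((F * L).mulVec x) := by
    intro x
    have hfac : L * Fᵀ * Ωhat * F * L = (F * L)ᵀ * Ωhat * (F * L) := by
      simp only [Matrix.transpose_mul, hLT]
      simp [Matrix.mul_assoc]
    rw [hfac, ← Matrix.mulVec_mulVec, ← Matrix.mulVec_mulVec, dp_swap,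
      Matrix.transpose_transpose]
  have hMpd : M.PosDef := by
    refine Matrix.PosDef.of_dotProduct_mulVec_pos ?_ ?_
    · show Mᴴ = M
      simpa using hMT
    · intro x hx
      have hsx : star x = x := by simp
      rw [hsx, hMdef, Matrix.add_mulVec, dotProduct_add, Matrix.one_mulVec]
      have h1 : 0 ≤ ((F * L).mulVec x) ⬝ᵥ Ωhat.mulVec ((F * L).mulVec x) := by
        have := hΩ.dotProduct_mulVec_nonneg ((F * L).mulVec x)
        simpa using this
      have h2 : 0 < x ⬝ᵥ x := by
        rcases (dotProduct_self_eq_zero (v := x)).not.2 hx with h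
        have hnn : 0 ≤ x ⬝ᵥ x := Finset.sum_nonneg fun i _ => mul_self_nonneg _
        exact lt_of_le_of_ne hnn (Ne.symm h)
      rw [hquad x]
      linarith
  have hMdetpos : 0 < M.det := hMpd.det_pos
  have hMiT : (M⁻¹)ᵀ = M⁻¹ := by rw [Matrix.transpose_nonsing_inv, hMT]
  have hΨT : Ψᵀ = Ψ := by
    rw [hΨdef]
    simp only [Matrix.transpose_mul, hLT, hMiT]
    simp [Matrix.mul_assoc]
  set w0 : Fin m → ℝ := uplus - g with hw0
  set cz : Fin p → ℝ := fbar + Abar.mulVec z with hcz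
  set ez : Fin p → ℝ := lamHat - Ωhat.mulVec cz with hez
  set bz : Fin n → ℝ := L.mulVec (Fᵀ.mulVec ez) with hbz
  set K : ℝ := -(1/2 : ℝ) * (cz ⬝ᵥ Ωhat.mulVec cz - 2 * (lamHat ⬝ᵥ cz)) with hK
  -- pointwise rewriting of the integrand
  have hsteppt : ∀ ξ : Fin n → ℝ,
      ((2 * Real.pi) ^ (-(n : ℝ) / 2) * Real.exp (-(ξ ⬝ᵥ ξ) / 2)) *
        Real.exp (-(1 / 2) * ((cz + (F * L).mulVec ξ) ⬝ᵥ Ωhat.mulVec (cz + (F * L).mulVec ξ)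
          - 2 * (lamHat ⬝ᵥ (cz + (F * L).mulVec ξ))))
      = ((2 * Real.pi) ^ (-(n : ℝ) / 2) * Real.exp K) *
          Real.exp (-(1/2) * (ξ ⬝ᵥ M.mulVec ξ) + bz ⬝ᵥ ξ) := by
    intro ξ
    rw [mul_assoc, mul_assoc, ← Real.exp_add, ← Real.exp_add]
    congr 1
    have e1 : (cz + (F * L).mulVec ξ) ⬝ᵥ Ωhat.mulVec (cz + (F * L).mulVec ξ)
        = cz ⬝ᵥ Ωhat.mulVec cz + 2 * (cz ⬝ᵥ Ωhat.mulVec ((F * L).mulVec ξ))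
          + ((F * L).mulVec ξ) ⬝ᵥ Ωhat.mulVec ((F * L).mulVec ξ) := by
      rw [add_dotProduct, Matrix.mulVec_add, dotProduct_add, dotProduct_add,
        dp_sym hΩT ((F * L).mulVec ξ) cz]
      ring
    have e2 : lamHat ⬝ᵥ (cz + (F * L).mulVec ξ)
        = lamHat ⬝ᵥ cz + lamHat ⬝ᵥ ((F * L).mulVec ξ) := dotProduct_add _ _ _
    have e3 : ξ ⬝ᵥ M.mulVec ξ
        = ((F * L).mulVec ξ) ⬝ᵥ Ωhat.mulVec ((F * L).mulVec ξ) + ξ ⬝ᵥ ξ := by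
      rw [hMdef, Matrix.add_mulVec, dotProduct_add, Matrix.one_mulVec, hquad]
    have e4 : bz ⬝ᵥ ξ = lamHat ⬝ᵥ ((F * L).mulVec ξ)
        - cz ⬝ᵥ Ωhat.mulVec ((F * L).mulVec ξ) := by
      rw [hbz, Matrix.mulVec_mulVec, dp_swap' (L * Fᵀ) ez ξ, Matrix.transpose_mul, hLT,
        Matrix.transpose_transpose, ← Matrix.mulVec_mulVec, hez, sub_dotProduct,
        dp_swap' Ωhat cz _, hΩT]
    rw [e1, e2, e3, e4, hK]
    ring
  -- compute the integral
  have hc0 : ((2 * Real.pi) ^ (-(n : ℝ) / 2) : ℝ) * (2*π) ^ ((n:ℝ)/2) = 1 := by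
    rw [← Real.rpow_add (by positivity), show (-(n:ℝ)/2 + (n:ℝ)/2) = 0 by ring, Real.rpow_zero]
  have hint : (∫ ξ : Fin n → ℝ,
      ((2 * Real.pi) ^ (-(n : ℝ) / 2) * Real.exp (-(ξ ⬝ᵥ ξ) / 2)) *
        Real.exp (-(1 / 2) * ((cz + (F * L).mulVec ξ) ⬝ᵥ Ωhat.mulVec (cz + (F * L).mulVec ξ)
          - 2 * (lamHat ⬝ᵥ (cz + (F * L).mulVec ξ)))))
      = Real.exp K * (M.det ^ (-(1:ℝ)/2) * Real.exp ((1/2) * (bz ⬝ᵥ M⁻¹.mulVec bz))) := by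
    simp_rw [hsteppt]
    rw [integral_const_mul, gauss_integral M hMpd bz]
    calc (2 * Real.pi) ^ (-(n : ℝ) / 2) * Real.exp K *
          ((2*π) ^ ((n:ℝ)/2) * M.det ^ (-(1:ℝ)/2) * Real.exp ((1/2) * (bz ⬝ᵥ M⁻¹.mulVec bz)))
        = ((2 * Real.pi) ^ (-(n : ℝ) / 2) * (2*π) ^ ((n:ℝ)/2)) *
          (Real.exp K * (M.det ^ (-(1:ℝ)/2) * Real.exp ((1/2) * (bz ⬝ᵥ M⁻¹.mulVec bz)))) := by
          ring
      _ = Real.exp K * (M.det ^ (-(1:ℝ)/2) * Real.exp ((1/2) * (bz ⬝ᵥ M⁻¹.mulVec bz))) := by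
          rw [hc0, one_mul]
  rw [hint]
  -- the quadratic form in the exponent
  have hbzM : bz ⬝ᵥ M⁻¹.mulVec bz
      = (Fᵀ.mulVec ez) ⬝ᵥ Ψ.mulVec (Fᵀ.mulVec ez) := by
    rw [hbz, dp_swap' L (Fᵀ.mulVec ez) _, hLT, Matrix.mulVec_mulVec, Matrix.mulVec_mulVec,
      ← hΨdef]
  rw [hbzM]
  -- atoms
  have hA1 : (w0 - B.mulVec z) ⬝ᵥ Q⁻¹.mulVec (w0 - B.mulVec z)
      = w0 ⬝ᵥ Q⁻¹.mulVec w0 - 2 * (w0 ⬝ᵥ Q⁻¹.mulVec (B.mulVec z))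
        + (B.mulVec z) ⬝ᵥ Q⁻¹.mulVec (B.mulVec z) := by
    rw [sub_dotProduct, Matrix.mulVec_sub, dotProduct_sub, dotProduct_sub,
      dp_sym hQiT (B.mulVec z) w0]
    ring
  have hA2 : cz ⬝ᵥ Ωhat.mulVec cz
      = fbar ⬝ᵥ Ωhat.mulVec fbar + 2 * (fbar ⬝ᵥ Ωhat.mulVec (Abar.mulVec z))
        + (Abar.mulVec z) ⬝ᵥ Ωhat.mulVec (Abar.mulVec z) := by
    rw [hcz, add_dotProduct, Matrix.mulVec_add, dotProduct_add,
      dotProduct_add, dp_sym hΩT (Abar.mulVec z) fbar]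
    ring
  have hA3 : lamHat ⬝ᵥ cz = lamHat ⬝ᵥ fbar + lamHat ⬝ᵥ (Abar.mulVec z) := by
    rw [hcz, dotProduct_add]
  have hezε : ez = ε - Ωhat.mulVec (Abar.mulVec z) := by
    rw [hez, hcz, Matrix.mulVec_add, hεdef]
    abel
  have hA4 : (Fᵀ.mulVec ez) ⬝ᵥ Ψ.mulVec (Fᵀ.mulVec ez)
      = (Fᵀ.mulVec ε) ⬝ᵥ Ψ.mulVec (Fᵀ.mulVec ε)
        - 2 * ((Fᵀ.mulVec ε) ⬝ᵥ Ψ.mulVec (Fᵀ.mulVec (Ωhat.mulVec (Abar.mulVec z))))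
        + (Fᵀ.mulVec (Ωhat.mulVec (Abar.mulVec z))) ⬝ᵥ
            Ψ.mulVec (Fᵀ.mulVec (Ωhat.mulVec (Abar.mulVec z))) := by
    rw [hezε]
    simp only [Matrix.mulVec_sub, sub_dotProduct, dotProduct_sub]
    rw [dp_sym hΨT (Fᵀ.mulVec (Ωhat.mulVec (Abar.mulVec z))) (Fᵀ.mulVec ε)]
    ring
  have hsplit : Abarᵀ * (1 - Ωhat * F * Ψ * Fᵀ) * Ωhat * Abar
      = Abarᵀ * Ωhat * Abar - Abarᵀ * (Ωhat * F * Ψ * Fᵀ) * Ωhat * Abar := by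
    rw [Matrix.mul_sub, Matrix.mul_one, Matrix.sub_mul, Matrix.sub_mul]
  have hq1 : z ⬝ᵥ (Abarᵀ * Ωhat * Abar).mulVec z
      = (Abar.mulVec z) ⬝ᵥ Ωhat.mulVec (Abar.mulVec z) := by
    simp only [← Matrix.mulVec_mulVec]
    rw [dp_swap Abarᵀ, Matrix.transpose_transpose]
  have hq2 : z ⬝ᵥ (Abarᵀ * (Ωhat * F * Ψ * Fᵀ) * Ωhat * Abar).mulVec z
      = (Fᵀ.mulVec (Ωhat.mulVec (Abar.mulVec z))) ⬝ᵥ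
          Ψ.mulVec (Fᵀ.mulVec (Ωhat.mulVec (Abar.mulVec z))) := by
    simp only [← Matrix.mulVec_mulVec]
    rw [dp_swap Abarᵀ, Matrix.transpose_transpose, dp_swap Ωhat, hΩT, dp_swap F]
  have hq3 : z ⬝ᵥ (Bᵀ * Q⁻¹ * B).mulVec z
      = (B.mulVec z) ⬝ᵥ Q⁻¹.mulVec (B.mulVec z) := by
    simp only [← Matrix.mulVec_mulVec]
    rw [dp_swap Bᵀ, Matrix.transpose_transpose]
  have hB2 : z ⬝ᵥ Ω.mulVec z
      = (Abar.mulVec z) ⬝ᵥ Ωhat.mulVec (Abar.mulVec z)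
        - (Fᵀ.mulVec (Ωhat.mulVec (Abar.mulVec z))) ⬝ᵥ
            Ψ.mulVec (Fᵀ.mulVec (Ωhat.mulVec (Abar.mulVec z)))
        + (B.mulVec z) ⬝ᵥ Q⁻¹.mulVec (B.mulVec z) := by
    rw [hΩdef, hsplit, Matrix.add_mulVec, dotProduct_add, Matrix.sub_mulVec,
      dotProduct_sub, hq1, hq2, hq3]
  have hs2 : (Bᵀ.mulVec (Q⁻¹.mulVec w0)) ⬝ᵥ z = w0 ⬝ᵥ Q⁻¹.mulVec (B.mulVec z) := by
    rw [dp_swap' Bᵀ, Matrix.transpose_transpose, dp_swap' Q⁻¹, hQiT]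
  have hε1 : ε ⬝ᵥ (Abar.mulVec z)
      = lamHat ⬝ᵥ (Abar.mulVec z) - fbar ⬝ᵥ Ωhat.mulVec (Abar.mulVec z) := by
    rw [hεdef, sub_dotProduct, dp_swap' Ωhat, hΩT]
  have hε2 : ((Ωhat * F * Ψ * Fᵀ).mulVec ε) ⬝ᵥ (Abar.mulVec z)
      = (Fᵀ.mulVec ε) ⬝ᵥ Ψ.mulVec (Fᵀ.mulVec (Ωhat.mulVec (Abar.mulVec z))) := by
    simp only [← Matrix.mulVec_mulVec]
    rw [dp_swap' Ωhat, hΩT, dp_swap' F, dp_swap' Ψ, hΨT]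
  have hs1 : (Abarᵀ.mulVec ((1 - Ωhat * F * Ψ * Fᵀ).mulVec ε)) ⬝ᵥ z
      = lamHat ⬝ᵥ (Abar.mulVec z) - fbar ⬝ᵥ Ωhat.mulVec (Abar.mulVec z)
        - (Fᵀ.mulVec ε) ⬝ᵥ Ψ.mulVec (Fᵀ.mulVec (Ωhat.mulVec (Abar.mulVec z))) := by
    rw [dp_swap' Abarᵀ, Matrix.transpose_transpose, Matrix.sub_mulVec, Matrix.one_mulVec,
      sub_dotProduct, hε1, hε2]
  have hB3 : lam ⬝ᵥ z
      = lamHat ⬝ᵥ (Abar.mulVec z) - fbar ⬝ᵥ Ωhat.mulVec (Abar.mulVec z)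
        - (Fᵀ.mulVec ε) ⬝ᵥ Ψ.mulVec (Fᵀ.mulVec (Ωhat.mulVec (Abar.mulVec z)))
        + w0 ⬝ᵥ Q⁻¹.mulVec (B.mulVec z) := by
    rw [hlamdef, add_dotProduct, hs1, hs2]
  rw [hZ]
  apply mul_exp_shuffle
  rw [hK, hA1, hA2, hA3, hA4, hτ, hB2, hB3]
  ring
end

section
/- Let Q := G Gᵀ be symmetric positive definite where G is a real m×n matrix, define L := I_n − Gᵀ Q⁻¹ G, let Ω̂ be a symmetric positive semidefinite real p×p matrix, F a real p×n matrix, Ā a real p×p matrix, B a real m×p matrix, and set M := L Fᵀ Ω̂ F L + I_n and Ψ := L M⁻¹ L. Then the matrix Ω := Āᵀ (I_p − Ω̂ F Ψ Fᵀ) Ω̂ Ā + Bᵀ Q⁻¹ B is symmetric and positive semidefinite. -/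
open Matrix

private lemma conj_psd {k l : ℕ} {A : Matrix (Fin k) (Fin k) ℝ} (hA : A.PosSemidef)
    (B : Matrix (Fin k) (Fin l) ℝ) : (Bᵀ * A * B).PosSemidef := by
  rw [← conjTranspose_eq_transpose_of_trivial]
  exact hA.conjTranspose_mul_mul_same B

open scoped MatrixOrder in
private lemma aux_core {n p : ℕ} (L : Matrix (Fin n) (Fin n) ℝ) (hLt : Lᵀ = L)
    (Ωhat : Matrix (Fin p) (Fin p) ℝ) (hΩ : Ωhat.PosSemidef)
    (F : Matrix (Fin p) (Fin n) ℝ) (Abar : Matrix (Fin p) (Fin p) ℝ) :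
    (Abarᵀ * (1 - Ωhat * F * (L * (L * Fᵀ * Ωhat * F * L + 1)⁻¹ * L) * Fᵀ) * Ωhat * Abar).PosSemidef := by
  set S := CFC.sqrt Ωhat with hSdef
  have hS : S * S = Ωhat := CFC.sqrt_mul_sqrt_self Ωhat (Matrix.nonneg_iff_posSemidef.mpr hΩ)
  have hSt : Sᵀ = S := by
    have := (Matrix.nonneg_iff_posSemidef.mp (CFC.sqrt_nonneg Ωhat)).isHermitian
    rwa [IsHermitian, conjTranspose_eq_transpose_of_trivial] at this
  have hS' : ∀ (k : ℕ) (X : Matrix (Fin p) (Fin k) ℝ), S * (S * X) = Ωhat * X := fun k X => by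
    rw [← Matrix.mul_assoc, hS]
  set C : Matrix (Fin p) (Fin n) ℝ := S * F * L with hCdef
  have hCt : Cᵀ * C = L * Fᵀ * Ωhat * F * L := by
    simp [hCdef, transpose_mul, hLt, hSt, Matrix.mul_assoc, hS']
  set M : Matrix (Fin n) (Fin n) ℝ := L * Fᵀ * Ωhat * F * L + 1 with hMdef
  set N : Matrix (Fin p) (Fin p) ℝ := C * Cᵀ + 1 with hNdef
  have hCC : (Cᵀ * C).PosSemidef := by
    rw [← conjTranspose_eq_transpose_of_trivial]
    exact posSemidef_conjTranspose_mul_self C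
  have hCC' : (C * Cᵀ).PosSemidef := by
    rw [← conjTranspose_eq_transpose_of_trivial]
    exact posSemidef_self_mul_conjTranspose C
  have hM : M.PosDef := by
    rw [hMdef, ← hCt]
    exact Matrix.PosDef.posSemidef_add hCC Matrix.PosDef.one
  have hN : N.PosDef := Matrix.PosDef.posSemidef_add hCC' Matrix.PosDef.one
  have hMM : M * M⁻¹ = 1 := Matrix.mul_nonsing_inv M (isUnit_iff_isUnit_det M |>.1 hM.isUnit)
  have hNN : N⁻¹ * N = 1 := Matrix.nonsing_inv_mul N (isUnit_iff_isUnit_det N |>.1 hN.isUnit)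
  have hCM : C * M = N * C := by
    rw [hMdef, ← hCt, hNdef, Matrix.mul_add, Matrix.add_mul, Matrix.mul_one, Matrix.one_mul,
      ← Matrix.mul_assoc]
  have hNC : N⁻¹ * C = C * M⁻¹ := by
    calc N⁻¹ * C = N⁻¹ * (C * (M * M⁻¹)) := by rw [hMM, Matrix.mul_one]
    _ = N⁻¹ * (C * M) * M⁻¹ := by simp only [Matrix.mul_assoc]
    _ = N⁻¹ * (N * C) * M⁻¹ := by rw [hCM]
    _ = N⁻¹ * N * (C * M⁻¹) := by simp only [Matrix.mul_assoc]
    _ = C * M⁻¹ := by rw [hNN, Matrix.one_mul]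
  have key : 1 - C * M⁻¹ * Cᵀ = N⁻¹ := by
    calc 1 - C * M⁻¹ * Cᵀ = 1 - N⁻¹ * C * Cᵀ := by rw [hNC]
    _ = N⁻¹ * N - N⁻¹ * (C * Cᵀ) := by rw [hNN, Matrix.mul_assoc]
    _ = N⁻¹ * (N - C * Cᵀ) := by rw [Matrix.mul_sub]
    _ = N⁻¹ := by rw [hNdef]; simp
  have expand : Abarᵀ * (1 - Ωhat * F * (L * M⁻¹ * L) * Fᵀ) * Ωhat * Abar
      = (S * Abar)ᵀ * (1 - C * M⁻¹ * Cᵀ) * (S * Abar) := by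
    simp [hCdef, Matrix.mul_sub, Matrix.sub_mul, transpose_mul, hSt, hLt,
      Matrix.mul_assoc, hS']
  rw [expand, key]
  exact conj_psd hN.inv.posSemidef (S * Abar)

/-- The backward information matrix produced by the backward prediction step for the
mixed linear/nonlinear CLG model is symmetric positive semidefinite. -/
theorem rbps_mixed_backward_info_posSemidef
    (m n p : ℕ) (G : Matrix (Fin m) (Fin n) ℝ) (hQ : (G * Gᵀ).PosDef)
    (Ωhat : Matrix (Fin p) (Fin p) ℝ) (hΩ : Ωhat.PosSemidef)
    (F : Matrix (Fin p) (Fin n) ℝ) (Abar : Matrix (Fin p) (Fin p) ℝ)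
    (B : Matrix (Fin m) (Fin p) ℝ) :
    let Q : Matrix (Fin m) (Fin m) ℝ := G * Gᵀ
    let L : Matrix (Fin n) (Fin n) ℝ := 1 - Gᵀ * Q⁻¹ * G
    let M : Matrix (Fin n) (Fin n) ℝ := L * Fᵀ * Ωhat * F * L + 1
    let Ψ : Matrix (Fin n) (Fin n) ℝ := L * M⁻¹ * L
    (Abarᵀ * (1 - Ωhat * F * Ψ * Fᵀ) * Ωhat * Abar + Bᵀ * Q⁻¹ * B).PosSemidef := by
  intro Q L M Ψ
  have hQit : Q⁻¹ᵀ = Q⁻¹ := by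
    have := hQ.inv.isHermitian
    rwa [IsHermitian, conjTranspose_eq_transpose_of_trivial] at this
  have hLt : Lᵀ = L := by
    simp [L, transpose_sub, transpose_mul, hQit, Matrix.mul_assoc]
  have h1 := aux_core L hLt Ωhat hΩ F Abar
  have h2 : (Bᵀ * Q⁻¹ * B).PosSemidef := conj_psd hQ.inv.posSemidef B
  exact h1.add h2
end

section
/- Let Ω̂ be a symmetric positive semidefinite real p×p matrix, F a real p×n matrix, A a real p×p matrix, and suppose R₁ (n×n), R₂ (n×p), R₃ (p×p) are real matrices satisfying R₁ᵀ R₁ = I_n + Fᵀ Ω̂ F, R₁ᵀ R₂ = Fᵀ Ω̂ A, and R₂ᵀ R₂ + R₃ᵀ R₃ = Aᵀ Ω̂ A. Set M := Fᵀ Ω̂ F + I_n. Then R₁ is invertible, R₂ᵀ (R₁ᵀ)⁻¹ = Aᵀ Ω̂ F M⁻¹, and R₃ᵀ R₃ = Aᵀ Ω̂ A − Aᵀ Ω̂ F M⁻¹ Fᵀ Ω̂ A = Aᵀ (I_p − Ω̂ F M⁻¹ Fᵀ) Ω̂ A; moreover for every ε ∈ ℝ^p, (Aᵀ − R₂ᵀ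 (R₁ᵀ)⁻¹ Fᵀ) ε = Aᵀ (I_p − Ω̂ F M⁻¹ Fᵀ) ε. -/
open Matrix

/-- Completion of the square-root implementation of the hierarchical backward
prediction: from the Gram identities of the QR factors, `R₁` is invertible,
`R₂ᵀ R₁⁻ᵀ = Aᵀ Ω̂ F M⁻¹`, `R₃ᵀ R₃` is the predicted backward information matrix,
and the predicted information vector is `(Aᵀ − R₂ᵀ R₁⁻ᵀ Fᵀ) ε`. -/
theorem sqrt_backward_prediction_identify
    (p n : ℕ) (Ωhat : Matrix (Fin p) (Fin p) ℝ) (hΩ : Ωhat.PosSemidef)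
    (F : Matrix (Fin p) (Fin n) ℝ) (A : Matrix (Fin p) (Fin p) ℝ)
    (R₁ : Matrix (Fin n) (Fin n) ℝ) (R₂ : Matrix (Fin n) (Fin p) ℝ)
    (R₃ : Matrix (Fin p) (Fin p) ℝ)
    (h₁ : R₁ᵀ * R₁ = 1 + Fᵀ * Ωhat * F)
    (h₂ : R₁ᵀ * R₂ = Fᵀ * Ωhat * A)
    (h₃ : R₂ᵀ * R₂ + R₃ᵀ * R₃ = Aᵀ * Ωhat * A) :
    let M : Matrix (Fin n) (Fin n) ℝ := Fᵀ * Ωhat * F + 1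
    IsUnit R₁ ∧
    R₂ᵀ * (R₁ᵀ)⁻¹ = Aᵀ * Ωhat * F * M⁻¹ ∧
    R₃ᵀ * R₃ = Aᵀ * Ωhat * A - Aᵀ * Ωhat * F * M⁻¹ * Fᵀ * Ωhat * A ∧
    Aᵀ * Ωhat * A - Aᵀ * Ωhat * F * M⁻¹ * Fᵀ * Ωhat * A
      = Aᵀ * (1 - Ωhat * F * M⁻¹ * Fᵀ) * Ωhat * A ∧
    ∀ ε : Fin p → ℝ,
      (Aᵀ - R₂ᵀ * (R₁ᵀ)⁻¹ * Fᵀ).mulVec ε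
        = Aᵀ.mulVec ((1 - Ωhat * F * M⁻¹ * Fᵀ).mulVec ε) := by
  intro M
  have hsemi : (Fᵀ * Ωhat * F).PosSemidef := by
    have := hΩ.conjTranspose_mul_mul_same F
    simpa using this
  have hMpd : M.PosDef := Matrix.PosDef.posSemidef_add hsemi Matrix.PosDef.one
  have hMunit : IsUnit M := hMpd.isUnit
  have hMeq : R₁ᵀ * R₁ = M := by rw [h₁]; exact add_comm _ _
  have hR1 : IsUnit R₁ := by
    have hdet : IsUnit (R₁.det * R₁.det) := by
      have : IsUnit M.det := hMunit.map (Matrix.detMonoidHom)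
      rw [← hMeq, Matrix.det_mul, Matrix.det_transpose] at this
      exact this
    exact (Matrix.isUnit_iff_isUnit_det R₁).2 (isUnit_of_mul_isUnit_left hdet)
  have hR1t : IsUnit R₁ᵀ := by
    rw [Matrix.isUnit_iff_isUnit_det, Matrix.det_transpose, ← Matrix.isUnit_iff_isUnit_det]
    exact hR1
  have hΩt : Ωhatᵀ = Ωhat := by have h := hΩ.isHermitian; simp at h; exact h
  have hMunit' : IsUnit M.det := hMunit.map (Matrix.detMonoidHom)
  have hR2 : R₂ = (R₁ᵀ)⁻¹ * (Fᵀ * Ωhat * A) := by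
    rw [← h₂, ← Matrix.mul_assoc, Matrix.nonsing_inv_mul _ ((Matrix.isUnit_iff_isUnit_det _).1 hR1t), Matrix.one_mul]
  have key : R₂ᵀ * (R₁ᵀ)⁻¹ = Aᵀ * Ωhat * F * M⁻¹ := by
    rw [hR2, Matrix.transpose_mul, Matrix.transpose_nonsing_inv, Matrix.transpose_transpose,
      Matrix.mul_assoc, ← Matrix.mul_inv_rev, hMeq]
    simp [Matrix.transpose_mul, hΩt, Matrix.mul_assoc]
  have hR2R2 : R₂ᵀ * R₂ = Aᵀ * Ωhat * F * M⁻¹ * Fᵀ * Ωhat * A := by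
    calc R₂ᵀ * R₂ = (R₂ᵀ * (R₁ᵀ)⁻¹) * (R₁ᵀ * R₂) := by
          rw [Matrix.mul_assoc, ← Matrix.mul_assoc (R₁ᵀ)⁻¹,
            Matrix.nonsing_inv_mul _ ((Matrix.isUnit_iff_isUnit_det _).1 hR1t), Matrix.one_mul]
      _ = Aᵀ * Ωhat * F * M⁻¹ * Fᵀ * Ωhat * A := by
          rw [key, h₂]; simp [Matrix.mul_assoc]
  have h3 : R₃ᵀ * R₃ = Aᵀ * Ωhat * A - Aᵀ * Ωhat * F * M⁻¹ * Fᵀ * Ωhat * A := by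
    rw [← h₃, hR2R2]; abel
  refine ⟨hR1, key, h3, by simp [Matrix.mul_sub, Matrix.sub_mul, Matrix.mul_assoc], fun ε => ?_⟩
  rw [key, Matrix.mulVec_mulVec]
  simp [Matrix.mul_sub, Matrix.mul_assoc]
end

section
/- Let Q½ be an invertible real m×m matrix and set Q := Q½ (Q½)ᵀ; let Ω̂½ be a real p×p matrix and set Ω̂ := Ω̂½ (Ω̂½)ᵀ; let L be a symmetric real n×n matrix, F a real p×n matrix, Ā a real p×p matrix, and B a real m×p matrix. Suppose 𝒬 is a real (n+p+m)×(n+p+m) matrix with 𝒬ᵀ 𝒬 = I, and R₁ (n×n), R₂ (n×p), R₃ (p×p) are matrices such that the (n+p+m)×(n+p) block matrix with block rows [I_n, 0; (Ω̂½)ᵀ F L, (Ω̂½)ᵀ Ā; 0, (Q½)⁻¹ B] equals 𝒬 times the block matrix with block rows [R₁, R₂; 0, R₃; 0, 0]. Set M := L Fᵀ Ω̂ F L + I_n. Then R₁ᵀ R₁ = M, R₁ᵀ R₂ = L Fᵀ Ω̂ Ā, and R₃ᵀ R₃ = Āᵀ Ω̂ Ā + Bᵀ Q⁻¹ B − Āᵀ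 Ω̂ F L M⁻¹ L Fᵀ Ω̂ Ā. -/
open Matrix

lemma gram_three_rows {a b c n p : Type*} [Fintype a] [Fintype b] [Fintype c]
    (X1 : Matrix a n ℝ) (X2 : Matrix a p ℝ) (Y1 : Matrix b n ℝ) (Y2 : Matrix b p ℝ)
    (Z1 : Matrix c n ℝ) (Z2 : Matrix c p ℝ) :
    (Matrix.fromRows (Matrix.fromCols X1 X2)
        (Matrix.fromRows (Matrix.fromCols Y1 Y2) (Matrix.fromCols Z1 Z2)))ᵀ *
      (Matrix.fromRows (Matrix.fromCols X1 X2)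
        (Matrix.fromRows (Matrix.fromCols Y1 Y2) (Matrix.fromCols Z1 Z2)))
      = Matrix.fromBlocks (X1ᵀ * X1 + (Y1ᵀ * Y1 + Z1ᵀ * Z1)) (X1ᵀ * X2 + (Y1ᵀ * Y2 + Z1ᵀ * Z2))
          (X2ᵀ * X1 + (Y2ᵀ * Y1 + Z2ᵀ * Z1)) (X2ᵀ * X2 + (Y2ᵀ * Y2 + Z2ᵀ * Z2)) := by
  simp only [transpose_fromRows, transpose_fromCols, fromCols_mul_fromRows,
    fromRows_mul_fromCols, fromBlocks_add]

/-- Square-root (QR-based) implementation of the backward prediction step for the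
mixed linear/nonlinear CLG model: Gram-matrix identities for the triangular factor. -/
theorem sqrt_mixed_backward_prediction
    (m n p : ℕ) (Qsqrt : Matrix (Fin m) (Fin m) ℝ) (hQs : IsUnit Qsqrt)
    (Ωsqrt : Matrix (Fin p) (Fin p) ℝ)
    (L : Matrix (Fin n) (Fin n) ℝ) (hL : Lᵀ = L)
    (F : Matrix (Fin p) (Fin n) ℝ) (Abar : Matrix (Fin p) (Fin p) ℝ)
    (B : Matrix (Fin m) (Fin p) ℝ)
    (𝒬 : Matrix (Fin n ⊕ (Fin p ⊕ Fin m)) (Fin n ⊕ (Fin p ⊕ Fin m)) ℝ)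
    (h𝒬 : 𝒬ᵀ * 𝒬 = 1)
    (R₁ : Matrix (Fin n) (Fin n) ℝ) (R₂ : Matrix (Fin n) (Fin p) ℝ)
    (R₃ : Matrix (Fin p) (Fin p) ℝ)
    (hfac : Matrix.fromRows
        (Matrix.fromCols (1 : Matrix (Fin n) (Fin n) ℝ)
          (0 : Matrix (Fin n) (Fin p) ℝ))
        (Matrix.fromRows
          (Matrix.fromCols (Ωsqrtᵀ * F * L) (Ωsqrtᵀ * Abar))
          (Matrix.fromCols (0 : Matrix (Fin m) (Fin n) ℝ) (Qsqrt⁻¹ * B)))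
      = 𝒬 * Matrix.fromRows
          (Matrix.fromCols R₁ R₂)
          (Matrix.fromRows
            (Matrix.fromCols (0 : Matrix (Fin p) (Fin n) ℝ) R₃)
            (Matrix.fromCols (0 : Matrix (Fin m) (Fin n) ℝ)
              (0 : Matrix (Fin m) (Fin p) ℝ)))) :
    let Q : Matrix (Fin m) (Fin m) ℝ := Qsqrt * Qsqrtᵀ
    let Ωhat : Matrix (Fin p) (Fin p) ℝ := Ωsqrt * Ωsqrtᵀ
    let M : Matrix (Fin n) (Fin n) ℝ := L * Fᵀ * Ωhat * F * L + 1
    R₁ᵀ * R₁ = M ∧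
    R₁ᵀ * R₂ = L * Fᵀ * Ωhat * Abar ∧
    R₃ᵀ * R₃ = Abarᵀ * Ωhat * Abar + Bᵀ * Q⁻¹ * B
      - Abarᵀ * Ωhat * F * L * M⁻¹ * L * Fᵀ * Ωhat * Abar := by
  intro Q Ωhat M
  set A := Matrix.fromRows
        (Matrix.fromCols (1 : Matrix (Fin n) (Fin n) ℝ)
          (0 : Matrix (Fin n) (Fin p) ℝ))
        (Matrix.fromRows
          (Matrix.fromCols (Ωsqrtᵀ * F * L) (Ωsqrtᵀ * Abar))
          (Matrix.fromCols (0 : Matrix (Fin m) (Fin n) ℝ) (Qsqrt⁻¹ * B))) with hA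
  set R := Matrix.fromRows
          (Matrix.fromCols R₁ R₂)
          (Matrix.fromRows
            (Matrix.fromCols (0 : Matrix (Fin p) (Fin n) ℝ) R₃)
            (Matrix.fromCols (0 : Matrix (Fin m) (Fin n) ℝ)
              (0 : Matrix (Fin m) (Fin p) ℝ))) with hR
  have hgram : Aᵀ * A = Rᵀ * R := by
    rw [hfac, transpose_mul, Matrix.mul_assoc, ← Matrix.mul_assoc 𝒬ᵀ 𝒬 R, h𝒬, Matrix.one_mul]
  rw [hA, hR, gram_three_rows, gram_three_rows] at hgram
  rw [fromBlocks_inj] at hgram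
  obtain ⟨h11, h12, -, h22⟩ := hgram
  simp only [transpose_one, transpose_zero, Matrix.one_mul, Matrix.mul_one,
    Matrix.zero_mul, Matrix.mul_zero, add_zero, zero_add] at h11 h12 h22
  have e11 : R₁ᵀ * R₁ = M := by
    rw [← h11]
    show _ = L * Fᵀ * (Ωsqrt * Ωsqrtᵀ) * F * L + 1
    rw [add_comm]
    simp only [Matrix.transpose_mul, transpose_transpose, hL, Matrix.mul_assoc]
  have e12 : R₁ᵀ * R₂ = L * Fᵀ * Ωhat * Abar := by
    rw [← h12]
    show _ = L * Fᵀ * (Ωsqrt * Ωsqrtᵀ) * Abar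
    simp only [Matrix.transpose_mul, transpose_transpose, hL, Matrix.mul_assoc]
  refine ⟨e11, e12, ?_⟩
  have e22 : R₂ᵀ * R₂ + R₃ᵀ * R₃ = Abarᵀ * Ωhat * Abar + Bᵀ * Q⁻¹ * B := by
    rw [← h22]
    have hQinv : Q⁻¹ = (Qsqrt⁻¹)ᵀ * Qsqrt⁻¹ := by
      show (Qsqrt * Qsqrtᵀ)⁻¹ = _
      rw [Matrix.mul_inv_rev, Matrix.transpose_nonsing_inv]
    rw [hQinv]
    show (Ωsqrtᵀ * Abar)ᵀ * (Ωsqrtᵀ * Abar) + (Qsqrt⁻¹ * B)ᵀ * (Qsqrt⁻¹ * B)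
      = Abarᵀ * (Ωsqrt * Ωsqrtᵀ) * Abar + Bᵀ * ((Qsqrt⁻¹)ᵀ * Qsqrt⁻¹) * B
    simp only [Matrix.transpose_mul, transpose_transpose, Matrix.mul_assoc]
  have hMpd : M.PosDef := by
    have hMeq : M = (Ωsqrtᵀ * F * L)ᵀ * (Ωsqrtᵀ * F * L) + 1 := by
      show L * Fᵀ * (Ωsqrt * Ωsqrtᵀ) * F * L + 1 = _
      simp only [Matrix.transpose_mul, transpose_transpose, hL, Matrix.mul_assoc]
    rw [hMeq, ← conjTranspose_eq_transpose_of_trivial]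
    exact Matrix.PosDef.posSemidef_add (Matrix.posSemidef_conjTranspose_mul_self _)
      Matrix.PosDef.one
  have hMunit : IsUnit M := hMpd.isUnit
  have hR₁ : IsUnit R₁ := by
    have h : IsUnit (R₁ᵀ * R₁) := e11 ▸ hMunit
    rw [Matrix.isUnit_iff_isUnit_det] at h ⊢
    rw [Matrix.det_mul, Matrix.det_transpose] at h
    exact (isUnit_mul_self_iff.mp h)
  have hR₂ : R₂ᵀ * R₂ = Abarᵀ * Ωhat * F * L * M⁻¹ * L * Fᵀ * Ωhat * Abar := by
    have hMinv : M⁻¹ = R₁⁻¹ * (R₁ᵀ)⁻¹ := by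
      rw [← e11, Matrix.mul_inv_rev]
    have h1 : R₁ * R₁⁻¹ = 1 := Matrix.mul_nonsing_inv _
      (by rw [← Matrix.isUnit_iff_isUnit_det]; exact hR₁)
    have h2 : (R₁ᵀ)⁻¹ * R₁ᵀ = 1 := Matrix.nonsing_inv_mul _
      (by rw [Matrix.det_transpose, ← Matrix.isUnit_iff_isUnit_det]; exact hR₁)
    have key : R₂ᵀ * R₂ = (R₁ᵀ * R₂)ᵀ * M⁻¹ * (R₁ᵀ * R₂) := by
      rw [hMinv, Matrix.transpose_mul, transpose_transpose]
      calc R₂ᵀ * R₂ = R₂ᵀ * ((R₁ * R₁⁻¹) * ((R₁ᵀ)⁻¹ * R₁ᵀ)) * R₂ := by rw [h1, h2]; simp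
        _ = R₂ᵀ * R₁ * (R₁⁻¹ * (R₁ᵀ)⁻¹) * (R₁ᵀ * R₂) := by
            simp only [Matrix.mul_assoc]
    rw [key, e12]
    have hsym : (L * Fᵀ * Ωhat * Abar)ᵀ = Abarᵀ * Ωhat * F * L := by
      show (L * Fᵀ * (Ωsqrt * Ωsqrtᵀ) * Abar)ᵀ = Abarᵀ * (Ωsqrt * Ωsqrtᵀ) * F * L
      simp only [Matrix.transpose_mul, transpose_transpose, hL, Matrix.mul_assoc]
    rw [hsym]
    simp only [Matrix.mul_assoc]
  rw [← hR₂]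
  linear_combination (norm := noncomm_ring) e22
end
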